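/- arXiv:math/0212360 — 2 statements merged into one kernel-verified Lean document; each statement's English description precedes it below -/
import Mathlib

section
/- If u ∈ L∞(D,dA), then the Berezin transform ũ is real analytic on D and its Laplacian at the origin satisfies (Δũ)(0) = 8 ∫_D u(z)(2|z|² − 1) dA(z). -/
open MeasureTheory Complex Metric Filter

set_option maxHeartbeats 2000000
set_option synthInstance.maxHeartbeats 1000000

noncomputable section

/-- The open unit disk in `ℂ`. -/
def unitDisk : Set ℂ := Metric.ball (0 : ℂ) 1

/-- Normalized Lebesgue area measure on the unit disk (total mass 1). -/
def dA : Measure ℂ := (ENNReal.ofReal Real.pi)⁻¹ • (MeasureTheory.volume.restrict unitDisk)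

/-- `L²(D, dA)`. -/
abbrev Bsp := MeasureTheory.Lp ℂ 2 dA

/-- The Bergman space: elements of `L²(D,dA)` having a representative holomorphic on `D`. -/
def bergman : Submodule ℂ Bsp where
  carrier := {f | ∃ g : ℂ → ℂ, DifferentiableOn ℂ g unitDisk ∧ ∀ᵐ w ∂dA, f w = g w}
  zero_mem' := ⟨fun _ => 0, differentiableOn_const 0, by
    filter_upwards [MeasureTheory.Lp.coeFn_zero ℂ 2 dA] with w hw
    simpa using hw⟩
  add_mem' := by
    rintro f₁ f₂ ⟨g₁, hg₁, he₁⟩ ⟨g₂, hg₂, he₂⟩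
    exact ⟨g₁ + g₂, hg₁.add hg₂, by
      filter_upwards [MeasureTheory.Lp.coeFn_add f₁ f₂, he₁, he₂] with w h1 h2 h3
      rw [h1, Pi.add_apply, h2, h3, Pi.add_apply]⟩
  smul_mem' := by
    rintro c f ⟨g, hg, he⟩
    exact ⟨c • g, hg.const_smul c, by
      filter_upwards [MeasureTheory.Lp.coeFn_smul c f, he] with w h1 h2
      rw [h1, Pi.smul_apply, h2, Pi.smul_apply]⟩

noncomputable instance : NormedAddCommGroup (↥bergman) := inferInstance
noncomputable instance : InnerProductSpace ℂ (↥bergman) := inferInstance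
noncomputable instance : NormedSpace ℂ (↥bergman) := inferInstance

/-- The value function of an element of the Bergman space. -/
def bval (f : bergman) : ℂ → ℂ := ⇑(f : Bsp)

/-- The normalized Bergman reproducing kernel `k_z`. -/
def kerFun (z w : ℂ) : ℂ := (1 - (‖z‖ : ℂ) ^ 2) / (1 - (starRingEnd ℂ) z * w) ^ 2

/-- The Möbius map `φ_z`. -/
def moebius (z w : ℂ) : ℂ := (z - w) / (1 - (starRingEnd ℂ) z * w)

/-- Bounded measurable functions, i.e. (representatives of) elements of `L∞(D, dA)`. -/
def MemLinf (u : ℂ → ℂ) : Prop :=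
  MeasureTheory.AEStronglyMeasurable u dA ∧ ∃ C : ℝ, ∀ᵐ w ∂dA, ‖u w‖ ≤ C

/-- `H∞`: bounded holomorphic functions on the unit disk. -/
def Hinf : Set (ℂ → ℂ) :=
  {f | DifferentiableOn ℂ f unitDisk ∧ ∃ C : ℝ, ∀ w ∈ unitDisk, ‖f w‖ ≤ C}

/-- Membership in `𝒰`, the C*-subalgebra of `L∞(D,dA)` generated by `H∞`: uniform limits
on `D` of finite sums of functions `f * conj g` with `f, g ∈ H∞`. -/
def memU (u : ℂ → ℂ) : Prop :=
  MemLinf u ∧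
    ∀ ε : ℝ, 0 < ε → ∃ (n : ℕ) (f g : Fin n → ℂ → ℂ),
      (∀ i, f i ∈ Hinf) ∧ (∀ i, g i ∈ Hinf) ∧
        ∀ w ∈ unitDisk, ‖u w - ∑ i, f i w * (starRingEnd ℂ) (g i w)‖ ≤ ε

/-- `T` is the Toeplitz-operator assignment: for every `u ∈ L∞(D,dA)`, `T u` is the operator
on the Bergman space characterized by `⟨g, T_u f⟩ = ⟨g, u f⟩` for all `f, g` in the Bergman
space (i.e. `T_u f = P (u f)` with `P` the orthogonal projection onto the Bergman space). -/
def IsToeplitz (T : (ℂ → ℂ) → (bergman →L[ℂ] bergman)) : Prop :=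
  ∀ u : ℂ → ℂ, MemLinf u → ∀ f g : bergman,
    (inner ℂ ((g : Bsp)) ((T u f : Bsp)) : ℂ) =
      ∫ w, (starRingEnd ℂ) (bval g w) * (u w * bval f w) ∂dA

/-- `k` is the assignment of normalized reproducing kernels `z ↦ k_z ∈ L²ₐ` for `z ∈ D`. -/
def IsKernel (k : ℂ → bergman) : Prop :=
  ∀ z ∈ unitDisk, ∀ᵐ w ∂dA, bval (k z) w = kerFun z w

/-- The Berezin transform of an operator on the Bergman space, relative to the kernel
assignment `k`:  `S̃(z) = ⟨S k_z, k_z⟩`. -/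
def berezinOp (k : ℂ → bergman) (S : bergman →L[ℂ] bergman) (z : ℂ) : ℂ :=
  (inner ℂ (k z) (S (k z)) : ℂ)

/-- The Berezin transform of a function: `ũ(z) = ∫_D u(w) |k_z(w)|² dA(w)`. -/
def berezinF (u : ℂ → ℂ) (z : ℂ) : ℂ :=
  ∫ w, u w * (((1 - ‖z‖ ^ 2) ^ 2 / ‖1 - (starRingEnd ℂ) z * w‖ ^ 4 : ℝ) : ℂ) ∂dA

/-- The Stolz (nontangential approach) region at `λ` with aperture `c`. -/
def stolz (lam : ℂ) (c : ℝ) : Set ℂ :=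
  {z | z ∈ unitDisk ∧ ‖z - lam‖ < c * (1 - ‖z‖)}

/-- `F` has nontangential limit `L` at the boundary point `λ`. -/
def HasNTLimit {E : Type*} [TopologicalSpace E] (F : ℂ → E) (lam : ℂ) (L : E) : Prop :=
  ∀ c : ℝ, 1 < c → Filter.Tendsto F (nhdsWithin lam (stolz lam c)) (nhds L)

/-- The filter of `z ∈ D` with `|z| → 1⁻`. -/
def atBoundary : Filter ℂ := Filter.comap (fun z => ‖z‖) (nhdsWithin 1 (Set.Iio 1))

/-- The Laplacian `Δ F = ∂²F/∂x² + ∂²F/∂y²` of a function on `ℂ ≃ ℝ²`. -/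
def lap (F : ℂ → ℂ) (z : ℂ) : ℂ :=
  fderiv ℝ (fun w => fderiv ℝ F w 1) z 1 +
    fderiv ℝ (fun w => fderiv ℝ F w Complex.I) z Complex.I

/-- A complex-valued function is harmonic on the unit disk if it is (twice continuously
differentiable and) has vanishing Laplacian there. -/
def HarmonicOnD (u : ℂ → ℂ) : Prop :=
  ContDiffOn ℝ 2 u unitDisk ∧ ∀ z ∈ unitDisk, lap u z = 0

end

noncomputable section BerezinAux

open Finset
open scoped ENNReal NNReal

def monoML (N : ℕ) (S : Finset (Fin N)) :
    ContinuousMultilinearMap ℝ (fun _ : Fin N => ℂ) ℂ :=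
  (ContinuousMultilinearMap.mkPiAlgebra ℝ (Fin N) ℂ).compContinuousLinearMap
    (fun i => if i ∈ S then Complex.conjCLE.toContinuousLinearMap else ContinuousLinearMap.id ℝ ℂ)

lemma monoML_apply (N : ℕ) (S : Finset (Fin N)) (v : Fin N → ℂ) :
    monoML N S v = ∏ i, if i ∈ S then (starRingEnd ℂ) (v i) else (v i) := by
  simp only [monoML, ContinuousMultilinearMap.compContinuousLinearMap_apply,
    ContinuousMultilinearMap.mkPiAlgebra_apply]
  refine Finset.prod_congr rfl fun i _ => ?_
  by_cases h : i ∈ S <;> simp [h, Complex.conjCLE]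

lemma monoML_norm_le (N : ℕ) (S : Finset (Fin N)) : ‖monoML N S‖ ≤ 1 := by
  refine ContinuousMultilinearMap.opNorm_le_bound zero_le_one fun v => ?_
  rw [monoML_apply, one_mul, norm_prod]
  refine Finset.prod_le_prod (fun i _ => norm_nonneg _) fun i _ => ?_
  by_cases h : i ∈ S <;> simp [h]

lemma monoML_diag (N : ℕ) (S : Finset (Fin N)) (v : ℂ) :
    monoML N S (fun _ => v) = ((starRingEnd ℂ) v) ^ S.card * v ^ (N - S.card) := by
  rw [monoML_apply, ← Finset.prod_mul_prod_compl S]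
  rw [Finset.prod_congr rfl (fun i hi => if_pos hi),
    Finset.prod_congr rfl (fun i hi => if_neg (Finset.mem_compl.mp hi)),
    Finset.prod_const, Finset.prod_const, Finset.card_compl, Fintype.card_fin]

/-- the formal multilinear series over ℝ attached to a double-coefficient family -/
def qSeries (A : ℕ × ℕ → ℂ) : FormalMultilinearSeries ℝ ℂ ℂ :=
  fun N => ∑ S : Finset (Fin N), (A (S.card, N - S.card) / (N.choose S.card : ℂ)) • monoML N S

lemma qSeries_diag (A : ℕ × ℕ → ℂ) (N : ℕ) (v : ℂ) :
    (qSeries A N) (fun _ => v)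
      = ∑ m ∈ Finset.range (N + 1), A (m, N - m) * ((starRingEnd ℂ) v) ^ m * v ^ (N - m) := by
  have h1 : (qSeries A N) (fun _ => v)
      = ∑ S : Finset (Fin N),
          (A (S.card, N - S.card) / (N.choose S.card : ℂ))
            * (((starRingEnd ℂ) v) ^ S.card * v ^ (N - S.card)) := by
    rw [qSeries, ContinuousMultilinearMap.sum_apply]
    refine Finset.sum_congr rfl fun S _ => ?_
    rw [ContinuousMultilinearMap.smul_apply, monoML_diag, smul_eq_mul]
  rw [h1]
  have h2 := Finset.sum_powerset_apply_card
    (fun m => (A (m, N - m) / (N.choose m : ℂ)) * (((starRingEnd ℂ) v) ^ m * v ^ (N - m)))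
    (x := (Finset.univ : Finset (Fin N)))
  rw [Finset.powerset_univ] at h2
  rw [h2, Finset.card_univ, Fintype.card_fin]
  refine Finset.sum_congr rfl fun m hm => ?_
  rw [Finset.mem_range, Nat.lt_succ_iff] at hm
  have hch : ((N.choose m : ℕ) : ℂ) ≠ 0 := by
    exact_mod_cast Nat.cast_ne_zero.mpr (Nat.choose_pos hm).ne'
  rw [nsmul_eq_mul]
  field_simp

lemma qSeries_norm_le (A : ℕ × ℕ → ℂ) (C : ℝ) (hA : ∀ m n, ‖A (m, n)‖ ≤ C * (m + 1) * (n + 1))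
    (N : ℕ) : ‖qSeries A N‖ ≤ C * (N + 1) ^ 3 := by
  have hC : 0 ≤ C := by
    have h0 := (norm_nonneg (A (0,0))).trans (hA 0 0)
    simpa using h0
  calc ‖qSeries A N‖
      ≤ ∑ S : Finset (Fin N), ‖(A (S.card, N - S.card) / (N.choose S.card : ℂ)) • monoML N S‖ :=
        norm_sum_le _ _
    _ ≤ ∑ S : Finset (Fin N), ‖A (S.card, N - S.card)‖ / (N.choose S.card : ℝ) := by
        refine Finset.sum_le_sum fun S _ => ?_
        refine (ContinuousMultilinearMap.opNorm_smul_le _ _).trans ?_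
        have h1 : ‖((N.choose S.card : ℕ) : ℂ)‖ = (N.choose S.card : ℝ) := by
          simp
        rw [norm_div, h1]
        calc ‖A (S.card, N - S.card)‖ / (N.choose S.card : ℝ) * ‖monoML N S‖
            ≤ ‖A (S.card, N - S.card)‖ / (N.choose S.card : ℝ) * 1 := by
              refine mul_le_mul_of_nonneg_left (monoML_norm_le N S) (by positivity)
          _ = _ := mul_one _
    _ ≤ C * (N + 1) ^ 3 := by
        have h2 := Finset.sum_powerset_apply_card
          (fun m => ‖A (m, N - m)‖ / (N.choose m : ℝ)) (x := (Finset.univ : Finset (Fin N)))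
        rw [Finset.powerset_univ] at h2
        rw [h2, Finset.card_univ, Fintype.card_fin]
        have h3 : ∀ m ∈ Finset.range (N + 1),
            (N.choose m) • (‖A (m, N - m)‖ / (N.choose m : ℝ)) ≤ C * (N+1) * (N+1) := by
          intro m hm
          rw [Finset.mem_range, Nat.lt_succ_iff] at hm
          have hch : (0:ℝ) < (N.choose m : ℝ) := by exact_mod_cast Nat.choose_pos hm
          rw [nsmul_eq_mul, mul_comm, div_mul_cancel₀ _ hch.ne']
          calc ‖A (m, N - m)‖ ≤ C * ((m:ℝ) + 1) * (((N - m : ℕ):ℝ) + 1) := hA m (N - m)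
              _ ≤ C * (N + 1) * (N + 1) := by
                  have h4 : (m:ℝ) + 1 ≤ (N:ℝ) + 1 := by
                    have : (m:ℝ) ≤ N := by exact_mod_cast hm
                    linarith
                  have h5 : ((N - m : ℕ):ℝ) + 1 ≤ (N:ℝ) + 1 := by
                    have : (N - m : ℕ) ≤ N := Nat.sub_le _ _
                    have : ((N - m : ℕ):ℝ) ≤ N := by exact_mod_cast this
                    linarith
                  have h7 : (0:ℝ) ≤ ((N - m : ℕ):ℝ) + 1 := by positivity
                  have s1 : C * ((m:ℝ) + 1) * (((N - m : ℕ):ℝ) + 1)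
                      ≤ C * ((N:ℝ) + 1) * (((N - m : ℕ):ℝ) + 1) :=
                    mul_le_mul_of_nonneg_right (mul_le_mul_of_nonneg_left h4 hC) h7
                  have s2 : C * ((N:ℝ) + 1) * (((N - m : ℕ):ℝ) + 1)
                      ≤ C * ((N:ℝ) + 1) * ((N:ℝ) + 1) :=
                    mul_le_mul_of_nonneg_left h5 (by positivity)
                  linarith
        calc ∑ m ∈ Finset.range (N + 1), (N.choose m) • (‖A (m, N - m)‖ / (N.choose m : ℝ))
            ≤ ∑ _m ∈ Finset.range (N + 1), C * (N+1) * (N+1) := Finset.sum_le_sum h3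
          _ = C * (N + 1) ^ 3 := by
              rw [Finset.sum_const, Finset.card_range, nsmul_eq_mul]; push_cast; ring


lemma summable_lin_geom {t : ℝ} (ht0 : 0 ≤ t) (ht : t < 1) :
    Summable (fun m : ℕ => ((m:ℝ) + 1) * t ^ m) := by
  have hnorm : ‖t‖ < 1 := by rwa [Real.norm_eq_abs, _root_.abs_of_nonneg ht0]
  have h1 := summable_pow_mul_geometric_of_norm_lt_one 1 hnorm
  have h2 : Summable (fun m : ℕ => t ^ m) := summable_geometric_of_lt_one ht0 ht
  have h3 := h1.add h2
  refine h3.congr fun m => ?_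
  push_cast
  ring

lemma summable_cube_geom {t : ℝ} (ht0 : 0 ≤ t) (ht : t < 1) :
    Summable (fun m : ℕ => ((m:ℝ) + 1) ^ 3 * t ^ m) := by
  have hnorm : ‖t‖ < 1 := by rwa [Real.norm_eq_abs, _root_.abs_of_nonneg ht0]
  have h3 := summable_pow_mul_geometric_of_norm_lt_one 3 hnorm
  have h2 := summable_pow_mul_geometric_of_norm_lt_one 2 hnorm
  have h1 := summable_pow_mul_geometric_of_norm_lt_one 1 hnorm
  have h0 : Summable (fun m : ℕ => t ^ m) := summable_geometric_of_lt_one ht0 ht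
  have := ((h3.add (h2.mul_left 3)).add ((h1.mul_left 3).add h0))
  refine this.congr fun m => ?_
  push_cast
  ring

lemma summable_prod_geom {C t : ℝ} (hC : 0 ≤ C) (ht0 : 0 ≤ t) (ht : t < 1) :
    Summable (fun p : ℕ × ℕ => C * ((p.1:ℝ) + 1) * ((p.2:ℝ) + 1) * t ^ (p.1 + p.2)) := by
  have hf : Summable (fun m : ℕ => C * (((m:ℝ) + 1) * t ^ m)) :=
    (summable_lin_geom ht0 ht).mul_left C
  have hg := summable_lin_geom ht0 ht
  have h := hf.mul_of_nonneg hg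
    (fun m => mul_nonneg hC (mul_nonneg (by positivity) (pow_nonneg ht0 m)))
    (fun n => mul_nonneg (by positivity) (pow_nonneg ht0 n))
  refine h.congr fun p => ?_
  rw [pow_add]
  ring

/-- the sum function of a double power series in `z̄, z` -/
def FF (A : ℕ × ℕ → ℂ) (z : ℂ) : ℂ :=
  ∑' p : ℕ × ℕ, A p * ((starRingEnd ℂ) z) ^ p.1 * z ^ p.2

lemma FF_term_norm_le (A : ℕ × ℕ → ℂ) (C : ℝ) (hA : ∀ m n, ‖A (m, n)‖ ≤ C * (m + 1) * (n + 1))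
    (z : ℂ) (p : ℕ × ℕ) :
    ‖A p * ((starRingEnd ℂ) z) ^ p.1 * z ^ p.2‖
      ≤ C * ((p.1:ℝ) + 1) * ((p.2:ℝ) + 1) * ‖z‖ ^ (p.1 + p.2) := by
  rw [norm_mul, norm_mul, norm_pow, norm_pow, RCLike.norm_conj, pow_add]
  have h1 := hA p.1 p.2
  have h2 : (0:ℝ) ≤ ‖z‖ ^ p.1 * ‖z‖ ^ p.2 := by positivity
  calc ‖A (p.1, p.2)‖ * ‖z‖ ^ p.1 * ‖z‖ ^ p.2
      = ‖A (p.1, p.2)‖ * (‖z‖ ^ p.1 * ‖z‖ ^ p.2) := by ring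
    _ ≤ (C * ((p.1:ℝ) + 1) * ((p.2:ℝ) + 1)) * (‖z‖ ^ p.1 * ‖z‖ ^ p.2) :=
        mul_le_mul_of_nonneg_right h1 h2
    _ = C * ((p.1:ℝ) + 1) * ((p.2:ℝ) + 1) * (‖z‖ ^ p.1 * ‖z‖ ^ p.2) := by ring

lemma FF_summable (A : ℕ × ℕ → ℂ) (C : ℝ) (hC : 0 ≤ C)
    (hA : ∀ m n, ‖A (m, n)‖ ≤ C * (m + 1) * (n + 1)) (z : ℂ) (hz : ‖z‖ < 1) :
    Summable (fun p : ℕ × ℕ => A p * ((starRingEnd ℂ) z) ^ p.1 * z ^ p.2) := by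
  refine Summable.of_norm (Summable.of_nonneg_of_le (fun p => norm_nonneg _)
    (fun p => FF_term_norm_le A C hA z p) (summable_prod_geom hC (norm_nonneg z) hz))

lemma hasFPS (A : ℕ × ℕ → ℂ) (C : ℝ) (hC : 0 ≤ C)
    (hA : ∀ m n, ‖A (m, n)‖ ≤ C * (m + 1) * (n + 1)) (r : NNReal)
    (hr0 : 0 < r) (hr1 : (r:ℝ) < 1) :
    HasFPowerSeriesOnBall (FF A) (qSeries A) 0 r := by
  have hr0' : (0:ℝ) ≤ r := r.coe_nonneg
  constructor
  · refine FormalMultilinearSeries.le_radius_of_summable _ ?_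
    have hbig : Summable (fun N : ℕ => C * (((N:ℝ) + 1) ^ 3 * (r:ℝ) ^ N)) :=
      (summable_cube_geom hr0' hr1).mul_left C
    refine Summable.of_nonneg_of_le (fun N => by positivity) (fun N => ?_) hbig
    have h1 := qSeries_norm_le A C hA N
    calc ‖qSeries A N‖ * (r:ℝ) ^ N ≤ (C * ((N:ℝ) + 1) ^ 3) * (r:ℝ) ^ N :=
          mul_le_mul_of_nonneg_right h1 (by positivity)
      _ = C * (((N:ℝ) + 1) ^ 3 * (r:ℝ) ^ N) := by ring
  · exact_mod_cast hr0
  · intro y hy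
    rw [zero_add]
    have hy1 : ‖y‖ < 1 := by
      rw [Metric.mem_eball, edist_zero_right] at hy
      have : ‖y‖₊ < r := by exact_mod_cast hy
      calc ‖y‖ = (‖y‖₊ : ℝ) := rfl
        _ < (r : ℝ) := by exact_mod_cast this
        _ < 1 := hr1
    have hsum := FF_summable A C hC hA y hy1
    have hg : HasSum (fun p : ℕ × ℕ => A p * ((starRingEnd ℂ) y) ^ p.1 * y ^ p.2) (FF A y) :=
      hsum.hasSum
    have h2 : HasSum ((fun p : ℕ × ℕ => A p * ((starRingEnd ℂ) y) ^ p.1 * y ^ p.2)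
        ∘ (Finset.HasAntidiagonal.sigmaAntidiagonalEquivProd (A := ℕ))) (FF A y) :=
      (Equiv.hasSum_iff _).mpr hg
    refine h2.sigma fun N => ?_
    have h4 : ∑ c : {x // x ∈ Finset.HasAntidiagonal.antidiagonal N},
        ((fun p : ℕ × ℕ => A p * ((starRingEnd ℂ) y) ^ p.1 * y ^ p.2)
          ∘ (Finset.HasAntidiagonal.sigmaAntidiagonalEquivProd (A := ℕ))) ⟨N, c⟩
        = (qSeries A N) (fun _ => y) := by
      have h5 : ∀ c : {x // x ∈ Finset.HasAntidiagonal.antidiagonal N},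
          ((fun p : ℕ × ℕ => A p * ((starRingEnd ℂ) y) ^ p.1 * y ^ p.2)
            ∘ (Finset.HasAntidiagonal.sigmaAntidiagonalEquivProd (A := ℕ))) ⟨N, c⟩
          = A (c : ℕ × ℕ) * ((starRingEnd ℂ) y) ^ (c : ℕ × ℕ).1 * y ^ (c : ℕ × ℕ).2 := by
        intro c; rfl
      rw [Finset.sum_congr rfl (fun c _ => h5 c)]
      rw [Finset.sum_coe_sort (f := fun p : ℕ × ℕ =>
        A p * ((starRingEnd ℂ) y) ^ p.1 * y ^ p.2)]
      rw [Finset.Nat.sum_antidiagonal_eq_sum_range_succ_mk, qSeries_diag]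
    exact h4 ▸ hasSum_fintype _


lemma lap_FF (A : ℕ × ℕ → ℂ) (C : ℝ) (hC : 0 ≤ C)
    (hA : ∀ m n, ‖A (m, n)‖ ≤ C * (m + 1) * (n + 1)) :
    fderiv ℝ (fun w => fderiv ℝ (FF A) w 1) 0 1 +
      fderiv ℝ (fun w => fderiv ℝ (FF A) w Complex.I) 0 Complex.I = 4 * A (1, 1) := by
  have hq := hasFPS A C hC hA (1/2) (by norm_num) (by norm_num)
  have hAn : AnalyticAt ℝ (FF A) 0 := hq.analyticAt
  have hAn' : AnalyticAt ℝ (fderiv ℝ (FF A)) 0 := hAn.fderiv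
  have hd' : DifferentiableAt ℝ (fderiv ℝ (FF A)) 0 := hAn'.differentiableAt
  have key : ∀ c : ℂ, fderiv ℝ (fun w => fderiv ℝ (FF A) w c) 0 c
      = (2 : ℂ) * ((qSeries A 2) (fun _ => c)) := by
    intro c
    have h1 : fderiv ℝ (fun w => fderiv ℝ (FF A) w c) 0
        = (fderiv ℝ (FF A) 0).comp (fderiv ℝ (fun _ : ℂ => c) 0)
          + (fderiv ℝ (fderiv ℝ (FF A)) 0).flip c :=
      fderiv_clm_apply hd' (differentiableAt_const c)
    have h2 : fderiv ℝ (fun w => fderiv ℝ (FF A) w c) 0 c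
        = fderiv ℝ (fderiv ℝ (FF A)) 0 c c := by
      rw [h1]; simp
    have h3 : iteratedFDeriv ℝ 2 (FF A) 0 (fun _ => c)
        = fderiv ℝ (fderiv ℝ (FF A)) 0 c c := by
      rw [iteratedFDeriv_two_apply]
    have h4 := hq.factorial_smul c 2
    rw [h2, ← h3, ← h4]
    simp [Nat.factorial]
  rw [key 1, key Complex.I, qSeries_diag, qSeries_diag]
  simp only [Finset.sum_range_succ, Finset.sum_range_zero, zero_add]
  norm_num [Complex.conj_I]
  ring_nf
  simp [Complex.I_sq]
  ring


lemma dA_isFiniteMeasure : IsFiniteMeasure dA := by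
  constructor
  rw [dA]
  rw [Measure.smul_apply, Measure.restrict_apply MeasurableSet.univ, Set.univ_inter, smul_eq_mul]
  refine ENNReal.mul_lt_top ?_ measure_ball_lt_top
  exact ENNReal.inv_lt_top.mpr (ENNReal.ofReal_pos.mpr Real.pi_pos)

lemma ae_norm_lt_one : ∀ᵐ w ∂dA, ‖w‖ < 1 := by
  rw [dA]
  refine Measure.ae_smul_measure ?_ _
  have h := ae_restrict_mem (μ := MeasureTheory.volume) (measurableSet_ball : MeasurableSet unitDisk)
  filter_upwards [h] with w hw
  simpa [unitDisk, mem_ball, dist_zero_right] using hw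

section IntegralPart

variable {u : ℂ → ℂ}

lemma integrable_of_memLinf (hu : MemLinf u) : Integrable u dA := by
  haveI := dA_isFiniteMeasure
  obtain ⟨hm, C, hC⟩ := hu
  exact Integrable.mono' (integrable_const C) hm hC

lemma aesm_mono (hu : MemLinf u) (m n : ℕ) :
    AEStronglyMeasurable (fun w => u w * w ^ m * ((starRingEnd ℂ) w) ^ n) dA := by
  refine (hu.1.mul ((continuous_pow m).aestronglyMeasurable)).mul ?_
  exact (Complex.continuous_conj.pow n).aestronglyMeasurable

lemma ae_bound_mono (m n : ℕ) :
    ∀ᵐ w ∂dA, ‖u w * w ^ m * ((starRingEnd ℂ) w) ^ n‖ ≤ ‖u w‖ := by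
  filter_upwards [ae_norm_lt_one] with w hw
  rw [norm_mul, norm_mul, norm_pow, norm_pow, RCLike.norm_conj]
  have h1 : ‖w‖ ^ m ≤ 1 := pow_le_one₀ (norm_nonneg w) hw.le
  have h2 : ‖w‖ ^ n ≤ 1 := pow_le_one₀ (norm_nonneg w) hw.le
  calc ‖u w‖ * ‖w‖ ^ m * ‖w‖ ^ n ≤ ‖u w‖ * 1 * 1 := by
        refine mul_le_mul (mul_le_mul_of_nonneg_left h1 (norm_nonneg _)) h2
          (pow_nonneg (norm_nonneg w) n) (by positivity)
    _ = ‖u w‖ := by ring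

lemma integrable_mono (hu : MemLinf u) (m n : ℕ) :
    Integrable (fun w => u w * w ^ m * ((starRingEnd ℂ) w) ^ n) dA :=
  Integrable.mono' (integrable_of_memLinf hu).norm (aesm_mono hu m n) (ae_bound_mono m n)

/-- the moments of `u` -/
def cc (u : ℂ → ℂ) (m n : ℕ) : ℂ := ∫ w, u w * w ^ m * ((starRingEnd ℂ) w) ^ n ∂dA

/-- scaled moments -/
def aa (u : ℂ → ℂ) (m n : ℕ) : ℂ := (((m:ℂ) + 1) * ((n:ℂ) + 1)) * cc u m n

/-- Taylor coefficients of the Berezin transform of `u` at `0` in `z̄^m z^n` -/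
def BB (u : ℂ → ℂ) (p : ℕ × ℕ) : ℂ :=
  aa u p.1 p.2 - 2 * (if 1 ≤ p.1 ∧ 1 ≤ p.2 then aa u (p.1 - 1) (p.2 - 1) else 0)
    + (if 2 ≤ p.1 ∧ 2 ≤ p.2 then aa u (p.1 - 2) (p.2 - 2) else 0)

lemma cc_bound (hu : MemLinf u) (m n : ℕ) : ‖cc u m n‖ ≤ ∫ w, ‖u w‖ ∂dA := by
  refine (norm_integral_le_integral_norm _).trans ?_
  exact integral_mono_ae (integrable_mono hu m n).norm (integrable_of_memLinf hu).norm
    (ae_bound_mono m n)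

lemma norm_cast_add_one (m : ℕ) : ‖((m:ℂ) + 1)‖ = (m:ℝ) + 1 := by
  rw [show ((m:ℂ) + 1) = ((m + 1 : ℕ) : ℂ) by push_cast; ring, Complex.norm_natCast]
  push_cast; ring

lemma aa_bound (hu : MemLinf u) (m n : ℕ) :
    ‖aa u m n‖ ≤ (∫ w, ‖u w‖ ∂dA) * (m + 1) * (n + 1) := by
  rw [aa, norm_mul, norm_mul, norm_cast_add_one, norm_cast_add_one]
  have h1 := cc_bound hu m n
  have h2 : (0:ℝ) ≤ ((m:ℝ) + 1) * ((n:ℝ) + 1) := by positivity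
  calc ((m:ℝ) + 1) * ((n:ℝ) + 1) * ‖cc u m n‖
      ≤ ((m:ℝ) + 1) * ((n:ℝ) + 1) * (∫ w, ‖u w‖ ∂dA) := by
        exact mul_le_mul_of_nonneg_left h1 h2
    _ = (∫ w, ‖u w‖ ∂dA) * (m + 1) * (n + 1) := by ring

lemma M_nonneg : 0 ≤ ∫ w, ‖u w‖ ∂dA := integral_nonneg fun w => norm_nonneg _

lemma BB_bound (hu : MemLinf u) (m n : ℕ) :
    ‖BB u (m, n)‖ ≤ (4 * ∫ w, ‖u w‖ ∂dA) * (m + 1) * (n + 1) := by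
  set M := ∫ w, ‖u w‖ ∂dA with hM
  have hM0 : 0 ≤ M := M_nonneg
  have key : ∀ k : ℕ, ‖(if k ≤ m ∧ k ≤ n then aa u (m - k) (n - k) else 0)‖
      ≤ M * (m + 1) * (n + 1) := by
    intro k
    split_ifs with h
    · refine (aa_bound hu (m - k) (n - k)).trans ?_
      have e1 : ((m - k : ℕ):ℝ) + 1 ≤ (m:ℝ) + 1 := by
        have : (m - k : ℕ) ≤ m := Nat.sub_le _ _
        have : ((m - k : ℕ):ℝ) ≤ (m:ℝ) := by exact_mod_cast this
        linarith
      have e2 : ((n - k : ℕ):ℝ) + 1 ≤ (n:ℝ) + 1 := by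
        have : (n - k : ℕ) ≤ n := Nat.sub_le _ _
        have : ((n - k : ℕ):ℝ) ≤ (n:ℝ) := by exact_mod_cast this
        linarith
      have p1 : (0:ℝ) ≤ ((m - k : ℕ):ℝ) + 1 := by positivity
      have p2 : (0:ℝ) ≤ ((n - k : ℕ):ℝ) + 1 := by positivity
      calc M * (((m - k : ℕ):ℝ) + 1) * (((n - k : ℕ):ℝ) + 1)
          ≤ M * ((m:ℝ) + 1) * (((n - k : ℕ):ℝ) + 1) :=
            mul_le_mul_of_nonneg_right (mul_le_mul_of_nonneg_left e1 hM0) p2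
        _ ≤ M * ((m:ℝ) + 1) * ((n:ℝ) + 1) :=
            mul_le_mul_of_nonneg_left e2 (by positivity)
    · simp; positivity
  have h1 : ‖aa u m n‖ ≤ M * (m + 1) * (n + 1) := aa_bound hu m n
  have h2 := key 1
  have h3 := key 2
  calc ‖BB u (m, n)‖
      ≤ ‖aa u m n - 2 * (if 1 ≤ m ∧ 1 ≤ n then aa u (m - 1) (n - 1) else 0)‖
        + ‖(if 2 ≤ m ∧ 2 ≤ n then aa u (m - 2) (n - 2) else 0)‖ := norm_add_le _ _
    _ ≤ ‖aa u m n‖ + 2 * ‖(if 1 ≤ m ∧ 1 ≤ n then aa u (m - 1) (n - 1) else 0)‖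
        + ‖(if 2 ≤ m ∧ 2 ≤ n then aa u (m - 2) (n - 2) else 0)‖ := by
        have := norm_sub_le (aa u m n) (2 * (if 1 ≤ m ∧ 1 ≤ n then aa u (m - 1) (n - 1) else 0))
        rw [norm_mul] at this
        simp only [Complex.norm_ofNat] at this
        linarith
    _ ≤ (M * (m + 1) * (n + 1)) + 2 * (M * (m + 1) * (n + 1)) + (M * (m + 1) * (n + 1)) := by
        have hp : (0:ℝ) ≤ M * (m + 1) * (n + 1) := by positivity
        nlinarith
    _ = (4 * M) * (m + 1) * (n + 1) := by ring


lemma geom2 {x : ℂ} (hx : ‖x‖ < 1) :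
    HasSum (fun n : ℕ => ((n:ℂ) + 1) * x ^ n) (((1 - x) ^ 2)⁻¹) := by
  have h1 := hasSum_geometric_of_norm_lt_one hx
  have h2 := hasSum_coe_mul_geometric_of_norm_lt_one hx
  have h3 := h2.add h1
  have hne : (1:ℂ) - x ≠ 0 := by
    intro h
    rw [sub_eq_zero] at h
    rw [← h] at hx
    simp at hx
  have h4 : (fun n : ℕ => (n:ℂ) * x ^ n + x ^ n) = fun n : ℕ => ((n:ℂ) + 1) * x ^ n := by
    funext n; ring
  rw [h4] at h3
  convert h3 using 1
  · rfl
  field_simp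
  ring

lemma kernel_eq (z w : ℂ) :
    (((1 - ‖z‖ ^ 2) ^ 2 / ‖1 - (starRingEnd ℂ) z * w‖ ^ 4 : ℝ) : ℂ)
      = (1 - (starRingEnd ℂ) z * z) ^ 2
        / ((1 - (starRingEnd ℂ) z * w) ^ 2 * (1 - z * (starRingEnd ℂ) w) ^ 2) := by
  have e1 : ((1 - ‖z‖ ^ 2 : ℝ) : ℂ) = 1 - (starRingEnd ℂ) z * z := by
    have h : (‖z‖ ^ 2 : ℝ) = Complex.normSq z := by
      rw [Complex.sq_norm]
    rw [Complex.ofReal_sub, Complex.ofReal_one, h, ← Complex.mul_conj]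
    ring
  have e2 : ((‖1 - (starRingEnd ℂ) z * w‖ ^ 4 : ℝ) : ℂ)
      = (1 - (starRingEnd ℂ) z * w) ^ 2 * (1 - z * (starRingEnd ℂ) w) ^ 2 := by
    have h4 : (‖1 - (starRingEnd ℂ) z * w‖ ^ 4 : ℝ)
        = (Complex.normSq (1 - (starRingEnd ℂ) z * w)) ^ 2 := by
      rw [← Complex.sq_norm]
      ring
    rw [h4, Complex.ofReal_pow, ← Complex.mul_conj]
    have hcd : (starRingEnd ℂ) (1 - (starRingEnd ℂ) z * w)
        = 1 - z * (starRingEnd ℂ) w := by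
      rw [map_sub, map_one, map_mul, Complex.conj_conj]
    rw [hcd]
    ring
  rw [Complex.ofReal_div, Complex.ofReal_pow, e1, e2]

lemma aa_if_bound (hu : MemLinf u) (k m n : ℕ) :
    ‖(if k ≤ m ∧ k ≤ n then aa u (m - k) (n - k) else 0)‖
      ≤ (∫ w, ‖u w‖ ∂dA) * (m + 1) * (n + 1) := by
  set M := ∫ w, ‖u w‖ ∂dA with hM
  have hM0 : 0 ≤ M := M_nonneg
  split_ifs with h
  · refine (aa_bound hu (m - k) (n - k)).trans ?_
    have e1 : ((m - k : ℕ):ℝ) + 1 ≤ (m:ℝ) + 1 := by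
      have h' : (m - k : ℕ) ≤ m := Nat.sub_le _ _
      have : ((m - k : ℕ):ℝ) ≤ (m:ℝ) := by exact_mod_cast h'
      linarith
    have e2 : ((n - k : ℕ):ℝ) + 1 ≤ (n:ℝ) + 1 := by
      have h' : (n - k : ℕ) ≤ n := Nat.sub_le _ _
      have : ((n - k : ℕ):ℝ) ≤ (n:ℝ) := by exact_mod_cast h'
      linarith
    have p2 : (0:ℝ) ≤ ((n - k : ℕ):ℝ) + 1 := by positivity
    calc M * (((m - k : ℕ):ℝ) + 1) * (((n - k : ℕ):ℝ) + 1)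
        ≤ M * ((m:ℝ) + 1) * (((n - k : ℕ):ℝ) + 1) :=
          mul_le_mul_of_nonneg_right (mul_le_mul_of_nonneg_left e1 hM0) p2
      _ ≤ M * ((m:ℝ) + 1) * ((n:ℝ) + 1) :=
          mul_le_mul_of_nonneg_left e2 (by positivity)
  · simp
    positivity

lemma berezin_eq (hu : MemLinf u) (z : ℂ) (hz : ‖z‖ < 1) :
    berezinF u z = FF (BB u) z := by
  haveI := dA_isFiniteMeasure
  set M := ∫ w, ‖u w‖ ∂dA with hM
  have hM0 : 0 ≤ M := M_nonneg
  set P : ℂ := (1 - (starRingEnd ℂ) z * z) ^ 2 with hP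
  set T : ℕ × ℕ → ℂ → ℂ := fun p w =>
    (u w * P) * ((((p.1:ℂ) + 1) * ((starRingEnd ℂ) z * w) ^ p.1)
      * (((p.2:ℂ) + 1) * (z * (starRingEnd ℂ) w) ^ p.2)) with hT
  -- a.e. the integrand is the sum of `T · w`
  have haeHS : ∀ᵐ w ∂dA,
      HasSum (fun p => T p w)
        (u w * (((1 - ‖z‖ ^ 2) ^ 2 / ‖1 - (starRingEnd ℂ) z * w‖ ^ 4 : ℝ) : ℂ)) := by
    filter_upwards [ae_norm_lt_one] with w hw
    have ha : ‖(starRingEnd ℂ) z * w‖ < 1 := by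
      rw [norm_mul, RCLike.norm_conj]
      exact lt_of_le_of_lt (mul_le_of_le_one_right (norm_nonneg z) hw.le) hz
    have hb : ‖z * (starRingEnd ℂ) w‖ < 1 := by
      rw [norm_mul, RCLike.norm_conj]
      exact lt_of_le_of_lt (mul_le_of_le_one_right (norm_nonneg z) hw.le) hz
    have h1 := geom2 ha
    have h2 := geom2 hb
    have hsumm : Summable (fun p : ℕ × ℕ =>
        (((p.1:ℂ) + 1) * ((starRingEnd ℂ) z * w) ^ p.1)
          * (((p.2:ℂ) + 1) * (z * (starRingEnd ℂ) w) ^ p.2)) := by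
      refine Summable.of_norm ?_
      have hs := (summable_lin_geom (norm_nonneg _) ha).mul_of_nonneg
        (summable_lin_geom (norm_nonneg _) hb)
        (fun m => mul_nonneg (by positivity) (by positivity))
        (fun n => mul_nonneg (by positivity) (by positivity))
      refine hs.congr fun p => ?_
      simp only [norm_mul, norm_pow, norm_cast_add_one, RCLike.norm_conj]
    have h3 := (h1.mul h2 hsumm).mul_left (u w * P)
    have heq : u w * (((1 - ‖z‖ ^ 2) ^ 2 / ‖1 - (starRingEnd ℂ) z * w‖ ^ 4 : ℝ) : ℂ)
        = (u w * P) * ((((1 - (starRingEnd ℂ) z * w) ^ 2)⁻¹)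
          * (((1 - z * (starRingEnd ℂ) w) ^ 2)⁻¹)) := by
      rw [kernel_eq z w, hP, div_eq_mul_inv, mul_inv]
      ring
    rw [heq]
    exact h3
  -- measurability of the terms
  have hmeasT : ∀ p : ℕ × ℕ, AEStronglyMeasurable (T p) dA := by
    intro p
    refine (hu.1.mul_const P).mul ?_
    refine Continuous.aestronglyMeasurable (Continuous.mul ?_ ?_)
    · exact continuous_const.mul ((continuous_const.mul continuous_id).pow p.1)
    · exact continuous_const.mul ((continuous_const.mul Complex.continuous_conj).pow p.2)
  -- norm bound for the terms
  set g : ℕ × ℕ → ℝ := fun p => ‖P‖ * ((p.1:ℝ) + 1) * ((p.2:ℝ) + 1) * ‖z‖ ^ (p.1 + p.2) with hg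
  have hg0 : ∀ p, 0 ≤ g p := fun p => by rw [hg]; positivity
  have hgs : Summable g := summable_prod_geom (norm_nonneg P) (norm_nonneg z) hz
  have hbT : ∀ p : ℕ × ℕ, ∀ᵐ w ∂dA, ‖T p w‖ ≤ g p * ‖u w‖ := by
    intro p
    filter_upwards [ae_norm_lt_one] with w hw
    have hna : ‖(starRingEnd ℂ) z * w‖ ≤ ‖z‖ := by
      rw [norm_mul, RCLike.norm_conj]
      exact mul_le_of_le_one_right (norm_nonneg z) hw.le
    have hnb : ‖z * (starRingEnd ℂ) w‖ ≤ ‖z‖ := by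
      rw [norm_mul, RCLike.norm_conj]
      exact mul_le_of_le_one_right (norm_nonneg z) hw.le
    calc ‖T p w‖ = (‖u w‖ * ‖P‖) * ((((p.1:ℝ) + 1) * ‖(starRingEnd ℂ) z * w‖ ^ p.1)
          * (((p.2:ℝ) + 1) * ‖z * (starRingEnd ℂ) w‖ ^ p.2)) := by
          simp only [hT, norm_mul, norm_pow, norm_cast_add_one]
          try ring
      _ ≤ (‖u w‖ * ‖P‖) * ((((p.1:ℝ) + 1) * ‖z‖ ^ p.1) * (((p.2:ℝ) + 1) * ‖z‖ ^ p.2)) := by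
          gcongr
      _ = g p * ‖u w‖ := by
          simp only [hg, pow_add]
          ring
  -- the lintegral bound
  have hlint : ∑' p : ℕ × ℕ, ∫⁻ w, ‖T p w‖₊ ∂dA ≠ ⊤ := by
    set L := ∫⁻ w, ‖u w‖₊ ∂dA with hL
    have hLne : L ≠ ⊤ := (integrable_of_memLinf hu).2.ne
    have key : ∀ p : ℕ × ℕ, ∫⁻ w, ‖T p w‖₊ ∂dA ≤ ENNReal.ofReal (g p) * L := by
      intro p
      have h1 : ∫⁻ w, (‖T p w‖₊ : ℝ≥0∞) ∂dA
          ≤ ∫⁻ w, ENNReal.ofReal (g p) * ‖u w‖₊ ∂dA := by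
        refine lintegral_mono_ae ?_
        filter_upwards [hbT p] with w hw
        calc (‖T p w‖₊ : ℝ≥0∞) = ENNReal.ofReal ‖T p w‖ := (ENNReal.ofReal_eq_coe_nnreal (norm_nonneg _)).symm
          _ ≤ ENNReal.ofReal (g p * ‖u w‖) := ENNReal.ofReal_le_ofReal hw
          _ = ENNReal.ofReal (g p) * ENNReal.ofReal ‖u w‖ := ENNReal.ofReal_mul (hg0 p)
          _ = ENNReal.ofReal (g p) * ‖u w‖₊ := by congr 1; exact ENNReal.ofReal_eq_coe_nnreal (norm_nonneg _)
      rwa [lintegral_const_mul' _ _ ENNReal.ofReal_ne_top] at h1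
    have h2 : ∑' p : ℕ × ℕ, ∫⁻ w, ‖T p w‖₊ ∂dA ≤ ENNReal.ofReal (∑' p, g p) * L :=
      calc ∑' p : ℕ × ℕ, ∫⁻ w, ‖T p w‖₊ ∂dA
          ≤ ∑' p : ℕ × ℕ, ENNReal.ofReal (g p) * L := ENNReal.tsum_le_tsum key
        _ = (∑' p : ℕ × ℕ, ENNReal.ofReal (g p)) * L := ENNReal.tsum_mul_right
        _ = ENNReal.ofReal (∑' p, g p) * L := by
            rw [ENNReal.ofReal_tsum_of_nonneg hg0 hgs]
    exact ne_top_of_le_ne_top (ENNReal.mul_ne_top ENNReal.ofReal_ne_top hLne) h2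
  -- swap integral and sum
  have step1 : berezinF u z = ∫ w, (∑' p : ℕ × ℕ, T p w) ∂dA := by
    rw [berezinF]
    refine integral_congr_ae ?_
    filter_upwards [haeHS] with w hw
    exact hw.tsum_eq.symm
  rw [step1, integral_tsum hmeasT hlint]
  -- value of each integral
  have hTint : ∀ p : ℕ × ℕ, ∫ w, T p w ∂dA
      = (P * (((p.1:ℂ) + 1) * ((p.2:ℂ) + 1)) * ((starRingEnd ℂ) z) ^ p.1 * z ^ p.2)
        * cc u p.1 p.2 := by
    intro p
    have hpt : (fun w => T p w) = fun w =>
        (P * (((p.1:ℂ) + 1) * ((p.2:ℂ) + 1)) * ((starRingEnd ℂ) z) ^ p.1 * z ^ p.2)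
          • (u w * w ^ p.1 * ((starRingEnd ℂ) w) ^ p.2) := by
      funext w
      simp only [hT, smul_eq_mul, mul_pow]
      ring
    rw [hpt, integral_smul, smul_eq_mul, cc]
  -- sum up
  have sumeq : ∑' p : ℕ × ℕ, ∫ w, T p w ∂dA
      = P * ∑' p : ℕ × ℕ, aa u p.1 p.2 * ((starRingEnd ℂ) z) ^ p.1 * z ^ p.2 := by
    rw [← tsum_mul_left]
    refine tsum_congr fun p => ?_
    rw [hTint p, aa]
    ring
  rw [sumeq]
  -- final algebra with the shifted sums
  set Ka : ℂ := ∑' p : ℕ × ℕ, aa u p.1 p.2 * ((starRingEnd ℂ) z) ^ p.1 * z ^ p.2 with hKa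
  have haaT : Summable (fun p : ℕ × ℕ =>
      aa u p.1 p.2 * ((starRingEnd ℂ) z) ^ p.1 * z ^ p.2) :=
    FF_summable (fun p => aa u p.1 p.2) M hM0 (fun m n => aa_bound hu m n) z hz
  have hσ : ∀ k : ℕ, Summable (fun p : ℕ × ℕ =>
      (if k ≤ p.1 ∧ k ≤ p.2 then aa u (p.1 - k) (p.2 - k) else 0)
        * ((starRingEnd ℂ) z) ^ p.1 * z ^ p.2) := by
    intro k
    exact FF_summable (fun p => if k ≤ p.1 ∧ k ≤ p.2 then aa u (p.1 - k) (p.2 - k) else 0)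
      M hM0 (fun m n => aa_if_bound hu k m n) z hz
  have hshift : ∀ k : ℕ, (∑' p : ℕ × ℕ,
      (if k ≤ p.1 ∧ k ≤ p.2 then aa u (p.1 - k) (p.2 - k) else 0)
        * ((starRingEnd ℂ) z) ^ p.1 * z ^ p.2)
      = ((starRingEnd ℂ) z * z) ^ k * Ka := by
    intro k
    have hinj : Function.Injective (fun p : ℕ × ℕ => (p.1 + k, p.2 + k)) := by
      intro p q h
      simp only [Prod.mk.injEq] at h
      exact Prod.ext (by omega) (by omega)
    have hsupp : Function.support (fun p : ℕ × ℕ =>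
        (if k ≤ p.1 ∧ k ≤ p.2 then aa u (p.1 - k) (p.2 - k) else 0)
          * ((starRingEnd ℂ) z) ^ p.1 * z ^ p.2)
        ⊆ Set.range (fun p : ℕ × ℕ => (p.1 + k, p.2 + k)) := by
      intro p hp
      rw [Function.mem_support] at hp
      by_contra hr
      apply hp
      have hc : ¬(k ≤ p.1 ∧ k ≤ p.2) := by
        intro hc
        exact hr ⟨(p.1 - k, p.2 - k), by
          simp [Nat.sub_add_cancel hc.1, Nat.sub_add_cancel hc.2]⟩
      simp [hc]
    have hre := hinj.tsum_eq hsupp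
    rw [← hre]
    have hterm : ∀ p : ℕ × ℕ,
        (if k ≤ p.1 + k ∧ k ≤ p.2 + k then aa u (p.1 + k - k) (p.2 + k - k) else 0)
          * ((starRingEnd ℂ) z) ^ (p.1 + k) * z ^ (p.2 + k)
        = (((starRingEnd ℂ) z) ^ k * z ^ k)
          * (aa u p.1 p.2 * ((starRingEnd ℂ) z) ^ p.1 * z ^ p.2) := by
      intro p
      rw [if_pos ⟨Nat.le_add_left k p.1, Nat.le_add_left k p.2⟩,
        Nat.add_sub_cancel, Nat.add_sub_cancel, pow_add, pow_add]
      ring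
    calc ∑' p : ℕ × ℕ,
        (if k ≤ p.1 + k ∧ k ≤ p.2 + k then aa u (p.1 + k - k) (p.2 + k - k) else 0)
          * ((starRingEnd ℂ) z) ^ (p.1 + k) * z ^ (p.2 + k)
        = ∑' p : ℕ × ℕ, (((starRingEnd ℂ) z) ^ k * z ^ k)
            * (aa u p.1 p.2 * ((starRingEnd ℂ) z) ^ p.1 * z ^ p.2) :=
          tsum_congr fun p => hterm p
      _ = (((starRingEnd ℂ) z) ^ k * z ^ k) * Ka := tsum_mul_left
      _ = ((starRingEnd ℂ) z * z) ^ k * Ka := by rw [mul_pow]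
  have e1 : (fun p : ℕ × ℕ => BB u p * ((starRingEnd ℂ) z) ^ p.1 * z ^ p.2)
      = fun p : ℕ × ℕ =>
        ((aa u p.1 p.2 * ((starRingEnd ℂ) z) ^ p.1 * z ^ p.2
          - 2 * ((if 1 ≤ p.1 ∧ 1 ≤ p.2 then aa u (p.1 - 1) (p.2 - 1) else 0)
              * ((starRingEnd ℂ) z) ^ p.1 * z ^ p.2))
         + (if 2 ≤ p.1 ∧ 2 ≤ p.2 then aa u (p.1 - 2) (p.2 - 2) else 0)
              * ((starRingEnd ℂ) z) ^ p.1 * z ^ p.2) := by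
    funext p
    rw [BB]
    ring
  rw [FF, e1]
  rw [Summable.tsum_add (haaT.sub ((hσ 1).mul_left 2)) (hσ 2)]
  rw [Summable.tsum_sub haaT ((hσ 1).mul_left 2)]
  rw [tsum_mul_left]
  rw [hshift 1, hshift 2]
  rw [hP]
  ring


end IntegralPart

end BerezinAux

/-- Lemma 33. If `u ∈ L∞(D,dA)`, then `ũ` is real analytic on `D` and
`(Δũ)(0) = 8 ∫_D u(z) (2|z|² − 1) dA(z)`. -/
theorem berezinF_analytic_and_lap_at_zero (u : ℂ → ℂ) (hu : MemLinf u) :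
    (∀ z ∈ unitDisk, AnalyticAt ℝ (berezinF u) z) ∧
      lap (berezinF u) 0 = 8 * ∫ z, u z * ((2 * ‖z‖ ^ 2 - 1 : ℝ) : ℂ) ∂dA := by
  have hM0 : 0 ≤ ∫ w, ‖u w‖ ∂dA := M_nonneg
  have hC : 0 ≤ 4 * ∫ w, ‖u w‖ ∂dA := by linarith
  have hBB : ∀ m n : ℕ, ‖BB u (m, n)‖ ≤ (4 * ∫ w, ‖u w‖ ∂dA) * (m + 1) * (n + 1) :=
    fun m n => BB_bound hu m n
  have hEQ : ∀ w ∈ Metric.ball (0:ℂ) 1, berezinF u w = FF (BB u) w := fun w hw =>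
    berezin_eq hu w (mem_ball_zero_iff.mp hw)
  constructor
  · intro z hz
    rw [unitDisk] at hz
    have hzn : ‖z‖ < 1 := mem_ball_zero_iff.mp hz
    have hden : (0:ℝ) < (‖z‖ + 1) / 2 := by positivity
    set r : NNReal := ⟨(‖z‖ + 1) / 2, hden.le⟩ with hrdef
    have hrc : (r : ℝ) = (‖z‖ + 1) / 2 := rfl
    have hr1 : (r : ℝ) < 1 := by rw [hrc]; linarith
    have hr0 : 0 < r := by rw [← NNReal.coe_pos, hrc]; positivity
    have hq := hasFPS (BB u) (4 * ∫ w, ‖u w‖ ∂dA) hC (fun m n => hBB m n) r hr0 hr1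
    have hz' : z ∈ Metric.eball (0:ℂ) r := by
      rw [Metric.mem_eball, edist_zero_right]
      have h1 : ‖z‖₊ < r := by
        rw [← NNReal.coe_lt_coe, coe_nnnorm, hrc]
        linarith
      exact_mod_cast h1
    have hAn := hq.analyticAt_of_mem hz'
    refine hAn.congr ?_
    have hball : Metric.ball (0:ℂ) 1 ∈ nhds z := (Metric.isOpen_ball).mem_nhds hz
    filter_upwards [hball] with w hw
    exact (hEQ w hw).symm
  · have hev : ∀ c : ℂ, fderiv ℝ (fun w => fderiv ℝ (berezinF u) w c) 0 c
        = fderiv ℝ (fun w => fderiv ℝ (FF (BB u)) w c) 0 c := by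
      intro c
      have h1 : (fun w => fderiv ℝ (berezinF u) w c) =ᶠ[nhds (0:ℂ)]
          (fun w => fderiv ℝ (FF (BB u)) w c) := by
        have hball : Metric.ball (0:ℂ) 1 ∈ nhds (0:ℂ) :=
          (Metric.isOpen_ball).mem_nhds (by simp)
        filter_upwards [hball] with w hw
        have h2 : berezinF u =ᶠ[nhds w] FF (BB u) := by
          filter_upwards [(Metric.isOpen_ball).mem_nhds hw] with y hy
          exact hEQ y hy
        rw [h2.fderiv_eq]
      rw [h1.fderiv_eq]
    rw [lap, hev 1, hev Complex.I]
    rw [lap_FF (BB u) (4 * ∫ w, ‖u w‖ ∂dA) hC (fun m n => hBB m n)]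
    have hBB11 : BB u (1, 1) = 4 * cc u 1 1 - 2 * cc u 0 0 := by
      rw [BB]
      norm_num [aa]
      try ring
    have hint : ∫ w, u w * ((2 * ‖w‖ ^ 2 - 1 : ℝ) : ℂ) ∂dA = 2 * cc u 1 1 - cc u 0 0 := by
      have hptw : (fun w => u w * ((2 * ‖w‖ ^ 2 - 1 : ℝ) : ℂ))
          = fun w => 2 * (u w * w ^ 1 * ((starRingEnd ℂ) w) ^ 1)
              - u w * w ^ 0 * ((starRingEnd ℂ) w) ^ 0 := by
        funext w
        have h : ((‖w‖ ^ 2 : ℝ) : ℂ) = w * (starRingEnd ℂ) w := by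
          rw [show (‖w‖ ^ 2 : ℝ) = Complex.normSq w by
            rw [Complex.sq_norm], ← Complex.mul_conj]
        rw [Complex.ofReal_sub, Complex.ofReal_mul, h, Complex.ofReal_one,
          Complex.ofReal_ofNat]
        ring
      rw [hptw]
      rw [integral_sub ((integrable_mono hu 1 1).const_mul 2) (integrable_mono hu 0 0)]
      rw [integral_const_mul]
      rw [cc, cc]
    rw [hBB11, hint]
    ring
end

section
/- Suppose u and v are (complex-valued) harmonic functions on D. Then the product uv is harmonic on D if and only if at least one of the following holds: (a) u and v are both holomorphic on D; (b) the conjugates ū and v̄ are both holomorphic on D; (c) there exist complex numbers α, β, not both 0, such that αu + βv and ᾱū − β̄v̄ are both holomorphic on D. -/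
open MeasureTheory Complex Metric Filter

set_option maxHeartbeats 2000000
set_option synthInstance.maxHeartbeats 1000000

section Helpers

open Complex

lemma uD_open : IsOpen unitDisk := Metric.isOpen_ball

lemma uD_conv : Convex ℝ unitDisk := convex_ball 0 1

lemma uD_conn : IsPreconnected unitDisk := (convex_ball (0:ℂ) 1).isPreconnected

lemma uD_nhds {z : ℂ} (hz : z ∈ unitDisk) : unitDisk ∈ nhds z := uD_open.mem_nhds hz

lemma zero_mem_uD : (0:ℂ) ∈ unitDisk := by simp [unitDisk]

lemma diffR_conj {F : ℂ → ℂ} {z : ℂ} (h : DifferentiableAt ℝ F z) :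
    DifferentiableAt ℝ (fun w => starRingEnd ℂ (F w)) z :=
  Complex.conjCLE.differentiable.differentiableAt.comp z h

lemma fderivR_conj_apply (F : ℂ → ℂ) (z c : ℂ) :
    fderiv ℝ (fun w => starRingEnd ℂ (F w)) z c = starRingEnd ℂ (fderiv ℝ F z c) := by
  have h : (fun w => starRingEnd ℂ (F w)) = (⇑Complex.conjCLE ∘ F) := rfl
  rw [h, Complex.conjCLE.comp_fderiv]
  simp

lemma fderivR_holo {F : ℂ → ℂ} {z : ℂ} (h : DifferentiableAt ℂ F z) (c : ℂ) :
    fderiv ℝ F z c = c * deriv F z := by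
  rw [h.fderiv_restrictScalars ℝ]
  show (fderiv ℂ F z) c = c * deriv F z
  calc (fderiv ℂ F z) c = (fderiv ℂ F z) (c • 1) := by rw [smul_eq_mul, mul_one]
    _ = c • (fderiv ℂ F z) 1 := (fderiv ℂ F z).map_smul c 1
    _ = c * deriv F z := by rw [fderiv_apply_one_eq_deriv, smul_eq_mul]

lemma differentiableAt_of_CR {F : ℂ → ℂ} {z : ℂ} (hd : DifferentiableAt ℝ F z)
    (hCR : fderiv ℝ F z Complex.I = Complex.I * fderiv ℝ F z 1) :
    DifferentiableAt ℂ F z := by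
  set c := fderiv ℝ F z 1 with hc
  have H : ((c • (1 : ℂ →L[ℂ] ℂ)).restrictScalars ℝ) = fderiv ℝ F z := by
    apply ContinuousLinearMap.ext
    intro x
    have hx : x = (x.re : ℝ) • (1:ℂ) + (x.im : ℝ) • Complex.I := by
      simp [Complex.real_smul, Complex.re_add_im]
    have h2 : fderiv ℝ F z x = (x.re : ℝ) • c + (x.im : ℝ) • (Complex.I * c) := by
      conv_lhs => rw [hx]
      rw [(fderiv ℝ F z).map_add, (fderiv ℝ F z).map_smul, (fderiv ℝ F z).map_smul, hCR, ← hc]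
    simp only [ContinuousLinearMap.coe_restrictScalars', ContinuousLinearMap.smul_apply,
      ContinuousLinearMap.one_apply, h2, Complex.real_smul, smul_eq_mul]
    conv_lhs => rw [← Complex.re_add_im x]
    ring
  exact ⟨_, hasFDerivAt_of_restrictScalars ℝ hd.hasFDerivAt H⟩

lemma deriv_eq_zero_of_conj_diff {g : ℂ → ℂ} {z : ℂ}
    (hg : DifferentiableAt ℂ g z)
    (hcg : DifferentiableAt ℂ (fun w => starRingEnd ℂ (g w)) z) :
    deriv g z = 0 := by
  have h1 := fderivR_holo hcg Complex.I
  have h2 := fderivR_holo hcg 1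
  rw [fderivR_conj_apply, fderivR_holo hg Complex.I] at h1
  rw [fderivR_conj_apply, fderivR_holo hg 1] at h2
  rw [one_mul, one_mul] at h2
  rw [map_mul, h2, Complex.conj_I] at h1
  -- h1 : -I * conj (deriv g z) = I * conj (deriv g z)
  have h3 : starRingEnd ℂ (deriv g z) = 0 := by
    linear_combination (Complex.I/2) * h1 + h2 + deriv (fun w => (starRingEnd ℂ) (g w)) z * Complex.I_sq
  have := congrArg (starRingEnd ℂ) h3
  simpa using this

lemma lap_congr {F G : ℂ → ℂ} {z : ℂ} (h : F =ᶠ[nhds z] G) : lap F z = lap G z := by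
  unfold lap
  have h' : ∀ᶠ w in nhds z, F =ᶠ[nhds w] G := eventually_eventually_nhds.mpr h
  have h1 : (fun w => fderiv ℝ F w 1) =ᶠ[nhds z] (fun w => fderiv ℝ G w 1) := by
    filter_upwards [h'] with w hw using by rw [hw.fderiv_eq]
  have hI : (fun w => fderiv ℝ F w Complex.I) =ᶠ[nhds z] (fun w => fderiv ℝ G w Complex.I) := by
    filter_upwards [h'] with w hw using by rw [hw.fderiv_eq]
  rw [h1.fderiv_eq, hI.fderiv_eq]

end Helpers


section Lap

open Complex

lemma shape_fderiv {a b : ℂ → ℂ} {y : ℂ} (ha : DifferentiableAt ℂ a y)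
    (hb : DifferentiableAt ℂ b y) (c : ℂ) :
    fderiv ℝ (fun w => a w + starRingEnd ℂ (b w)) y c
      = c * deriv a y + starRingEnd ℂ (c * deriv b y) := by
  have h1 : DifferentiableAt ℝ a y := ha.restrictScalars ℝ
  have h2 : DifferentiableAt ℝ (fun w => starRingEnd ℂ (b w)) y :=
    diffR_conj (hb.restrictScalars ℝ)
  rw [fderiv_fun_add h1 h2, ContinuousLinearMap.add_apply, fderivR_holo ha c,
    fderivR_conj_apply, fderivR_holo hb c]

lemma lap_prod {f g p q : ℂ → ℂ} {z : ℂ}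
    (hf : DifferentiableOn ℂ f unitDisk) (hg : DifferentiableOn ℂ g unitDisk)
    (hp : DifferentiableOn ℂ p unitDisk) (hq : DifferentiableOn ℂ q unitDisk)
    (hz : z ∈ unitDisk) :
    lap (fun w => (f w + starRingEnd ℂ (g w)) * (p w + starRingEnd ℂ (q w))) z
      = 4 * (deriv f z * starRingEnd ℂ (deriv q z)
          + deriv p z * starRingEnd ℂ (deriv g z)) := by
  have hfa := hf.analyticOnNhd uD_open
  have hga := hg.analyticOnNhd uD_open
  have hpa := hp.analyticOnNhd uD_open
  have hqa := hq.analyticOnNhd uD_open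
  have hfa' := hfa.deriv
  have hga' := hga.deriv
  have hpa' := hpa.deriv
  have hqa' := hqa.deriv
  -- differentiability at points of unitDisk
  have Df : ∀ w ∈ unitDisk, DifferentiableAt ℂ f w := fun w hw => (hfa w hw).differentiableAt
  have Dg : ∀ w ∈ unitDisk, DifferentiableAt ℂ g w := fun w hw => (hga w hw).differentiableAt
  have Dp : ∀ w ∈ unitDisk, DifferentiableAt ℂ p w := fun w hw => (hpa w hw).differentiableAt
  have Dq : ∀ w ∈ unitDisk, DifferentiableAt ℂ q w := fun w hw => (hqa w hw).differentiableAt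
  have Df' : ∀ w ∈ unitDisk, DifferentiableAt ℂ (deriv f) w :=
    fun w hw => (hfa' w hw).differentiableAt
  have Dg' : ∀ w ∈ unitDisk, DifferentiableAt ℂ (deriv g) w :=
    fun w hw => (hga' w hw).differentiableAt
  have Dp' : ∀ w ∈ unitDisk, DifferentiableAt ℂ (deriv p) w :=
    fun w hw => (hpa' w hw).differentiableAt
  have Dq' : ∀ w ∈ unitDisk, DifferentiableAt ℂ (deriv q) w :=
    fun w hw => (hqa' w hw).differentiableAt
  set U : ℂ → ℂ := fun w => f w + starRingEnd ℂ (g w) with hU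
  set V : ℂ → ℂ := fun w => p w + starRingEnd ℂ (q w) with hV
  have DUr : ∀ w ∈ unitDisk, DifferentiableAt ℝ U w := fun w hw =>
    ((Df w hw).restrictScalars ℝ).add (diffR_conj ((Dg w hw).restrictScalars ℝ))
  have DVr : ∀ w ∈ unitDisk, DifferentiableAt ℝ V w := fun w hw =>
    ((Dp w hw).restrictScalars ℝ).add (diffR_conj ((Dq w hw).restrictScalars ℝ))
  -- first-order derivative formula
  have e : ∀ c : ℂ, (fun w => fderiv ℝ (fun y => U y * V y) w c) =ᶠ[nhds z]
      (fun w => U w * (c * deriv p w + starRingEnd ℂ (c * deriv q w))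
        + V w * (c * deriv f w + starRingEnd ℂ (c * deriv g w))) := by
    intro c
    filter_upwards [uD_nhds hz] with w hw
    rw [fderiv_fun_mul (DUr w hw) (DVr w hw), ContinuousLinearMap.add_apply,
      ContinuousLinearMap.smul_apply, ContinuousLinearMap.smul_apply,
      shape_fderiv (Df w hw) (Dg w hw) c, shape_fderiv (Dp w hw) (Dq w hw) c,
      smul_eq_mul, smul_eq_mul]
  -- second-order derivatives
  have key : ∀ c d : ℂ,
      fderiv ℝ (fun w => U w * (c * deriv p w + starRingEnd ℂ (c * deriv q w))
        + V w * (c * deriv f w + starRingEnd ℂ (c * deriv g w))) z d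
      = U z * (d * (c * deriv (deriv p) z) + starRingEnd ℂ (d * (c * deriv (deriv q) z)))
        + (c * deriv p z + starRingEnd ℂ (c * deriv q z)) * (d * deriv f z + starRingEnd ℂ (d * deriv g z))
        + (V z * (d * (c * deriv (deriv f) z) + starRingEnd ℂ (d * (c * deriv (deriv g) z)))
          + (c * deriv f z + starRingEnd ℂ (c * deriv g z)) * (d * deriv p z + starRingEnd ℂ (d * deriv q z))) := by
    intro c d
    have hcp : DifferentiableAt ℂ (fun w => c * deriv p w) z := (Dp' z hz).const_mul c
    have hcq : DifferentiableAt ℂ (fun w => c * deriv q w) z := (Dq' z hz).const_mul c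
    have hcf : DifferentiableAt ℂ (fun w => c * deriv f w) z := (Df' z hz).const_mul c
    have hcg : DifferentiableAt ℂ (fun w => c * deriv g w) z := (Dg' z hz).const_mul c
    have hP : DifferentiableAt ℝ (fun w => c * deriv p w + starRingEnd ℂ (c * deriv q w)) z :=
      (hcp.restrictScalars ℝ).add (diffR_conj (hcq.restrictScalars ℝ))
    have hF : DifferentiableAt ℝ (fun w => c * deriv f w + starRingEnd ℂ (c * deriv g w)) z :=
      (hcf.restrictScalars ℝ).add (diffR_conj (hcg.restrictScalars ℝ))
    rw [fderiv_fun_add (f := fun w => U w * (c * deriv p w + starRingEnd ℂ (c * deriv q w)))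
        (g := fun w => V w * (c * deriv f w + starRingEnd ℂ (c * deriv g w)))
        ((DUr z hz).mul hP) ((DVr z hz).mul hF), ContinuousLinearMap.add_apply,
      fderiv_fun_mul (DUr z hz) hP, fderiv_fun_mul (DVr z hz) hF,
      ContinuousLinearMap.add_apply, ContinuousLinearMap.add_apply,
      ContinuousLinearMap.smul_apply, ContinuousLinearMap.smul_apply,
      ContinuousLinearMap.smul_apply, ContinuousLinearMap.smul_apply,
      shape_fderiv hcp hcq d, shape_fderiv hcf hcg d,
      shape_fderiv (Df z hz) (Dg z hz) d, shape_fderiv (Dp z hz) (Dq z hz) d,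
      smul_eq_mul, smul_eq_mul, smul_eq_mul, smul_eq_mul,
      deriv_const_mul c (Dp' z hz), deriv_const_mul c (Dq' z hz),
      deriv_const_mul c (Df' z hz), deriv_const_mul c (Dg' z hz)]
  unfold lap
  rw [(e 1).fderiv_eq, (e Complex.I).fderiv_eq, key 1 1, key Complex.I Complex.I]
  simp only [map_mul, map_one, Complex.conj_I]
  ring_nf
  simp only [Complex.I_sq]
  ring
end Lap


section Primitive

open Complex

lemma exists_primitive {h : ℂ → ℂ} (hd : DifferentiableOn ℂ h unitDisk) :
    ∃ F : ℂ → ℂ, ∀ z ∈ unitDisk, HasDerivAt F (h z) z := by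
  set p : FormalMultilinearSeries ℂ ℂ ℂ := cauchyPowerSeries h 0 ((2⁻¹ : NNReal) : ℝ) with hp
  have hsub : ∀ r : NNReal, (r:ℝ) < 1 → Metric.closedBall (0:ℂ) r ⊆ unitDisk := by
    intro r hr1 x hx
    simp only [Metric.mem_closedBall] at hx
    simp only [unitDisk, Metric.mem_ball]
    exact lt_of_le_of_lt hx hr1
  have hball : ∀ r : NNReal, 0 < r → (r : ℝ) < 1 → HasFPowerSeriesOnBall h p 0 r := by
    intro r hr0 hr1
    have H := (hd.mono (hsub r hr1)).hasFPowerSeriesOnBall hr0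
    have H2 := (hd.mono (hsub 2⁻¹ (by norm_num))).hasFPowerSeriesOnBall (R := 2⁻¹) (by norm_num)
    have heq : cauchyPowerSeries h 0 ((r : NNReal) : ℝ) = p :=
      H.hasFPowerSeriesAt.eq_formalMultilinearSeries H2.hasFPowerSeriesAt
    rwa [heq] at H
  refine ⟨fun z => ∑' n : ℕ, (p.coeff n / ((n:ℂ)+1)) * z^(n+1), ?_⟩
  intro z hz
  have hz1 : ‖z‖ < 1 := by simpa [unitDisk, Metric.mem_ball] using hz
  have hnorm : (0:ℝ) ≤ ‖z‖ := norm_nonneg z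
  set r : NNReal := ⟨(1 + ‖z‖)/2, by positivity⟩ with hr
  set r' : NNReal := ⟨(3 + ‖z‖)/4, by positivity⟩ with hr'
  have hrc : (r:ℝ) = (1 + ‖z‖)/2 := rfl
  have hrc' : (r':ℝ) = (3 + ‖z‖)/4 := rfl
  have hrlt1 : (r:ℝ) < 1 := by rw [hrc]; linarith
  have hr'lt1 : (r':ℝ) < 1 := by rw [hrc']; linarith
  have hrpos : 0 < r := by
    rw [← NNReal.coe_lt_coe, hrc]; norm_num; positivity
  have hr'pos : 0 < r' := by
    rw [← NNReal.coe_lt_coe, hrc']; norm_num; positivity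
  have hrr' : r < r' := by
    rw [← NNReal.coe_lt_coe, hrc, hrc']; linarith
  have hzr : ‖z‖ < (r:ℝ) := by rw [hrc]; linarith
  have hrad : (r : ENNReal) < p.radius :=
    lt_of_lt_of_le (by exact_mod_cast hrr') (hball r' hr'pos hr'lt1).r_le
  have hsumm : Summable (fun n => ‖p n‖ * (r:ℝ)^n) := p.summable_norm_mul_pow hrad
  have hsum : ∀ y : ℂ, ‖y‖ < (r:ℝ) → HasSum (fun n => p.coeff n * y^n) (h y) := by
    intro y hy
    have hmem : y ∈ Metric.eball (0:ℂ) r := by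
      rw [Metric.emetric_ball_nnreal, Metric.mem_ball, dist_zero_right]
      exact hy
    have H := (hball r hrpos hrlt1).hasSum hmem
    simp only [zero_add] at H
    have : (fun n => (p n) fun _ => y) = fun n => p.coeff n * y^n := by
      funext n
      rw [FormalMultilinearSeries.apply_eq_pow_smul_coeff, smul_eq_mul]
      ring
    rwa [this] at H
  have hcoeff : ∀ n : ℕ, ‖p.coeff n‖ ≤ ‖p n‖ := by
    intro n
    have h2 : ‖p n (fun _ => (1:ℂ))‖ ≤ ‖p n‖ * ∏ _i : Fin n, ‖(1:ℂ)‖ := (p n).le_opNorm _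
    calc ‖p.coeff n‖ = ‖p n (fun _ => (1:ℂ))‖ := rfl
      _ ≤ ‖p n‖ * ∏ _i : Fin n, ‖(1:ℂ)‖ := h2
      _ = ‖p n‖ := by simp
  have hDeriv : ∀ (n : ℕ), ∀ y ∈ Metric.ball (0:ℂ) (r:ℝ),
      HasDerivAt (fun x => (p.coeff n / ((n:ℂ)+1)) * x^(n+1)) (p.coeff n * y^n) y := by
    intro n y _
    have h1 := (hasDerivAt_pow (n+1) y).const_mul (p.coeff n / ((n:ℂ)+1))
    refine h1.congr_deriv ?_
    have hne : ((n:ℂ)+1) ≠ 0 := Nat.cast_add_one_ne_zero n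
    rw [Nat.add_sub_cancel]
    push_cast
    field_simp
  have hBound : ∀ (n : ℕ), ∀ y ∈ Metric.ball (0:ℂ) (r:ℝ),
      ‖p.coeff n * y^n‖ ≤ ‖p n‖ * (r:ℝ)^n := by
    intro n y hy
    rw [Metric.mem_ball, dist_zero_right] at hy
    rw [norm_mul, norm_pow]
    exact mul_le_mul (hcoeff n) (pow_le_pow_left₀ (norm_nonneg y) hy.le n)
      (by positivity) (norm_nonneg _)
  have hzero : Summable (fun n : ℕ => (p.coeff n / ((n:ℂ)+1)) * (0:ℂ)^(n+1)) := by
    have : (fun n : ℕ => (p.coeff n / ((n:ℂ)+1)) * (0:ℂ)^(n+1)) = fun _ => 0 := by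
      funext n; simp
    rw [this]; exact summable_zero
  have h0mem : (0:ℂ) ∈ Metric.ball (0:ℂ) (r:ℝ) := by
    simp only [Metric.mem_ball, dist_self]
    positivity
  have hzmem : z ∈ Metric.ball (0:ℂ) (r:ℝ) := by
    rw [Metric.mem_ball, dist_zero_right]; exact hzr
  have main := hasDerivAt_tsum_of_isPreconnected hsumm Metric.isOpen_ball
    ((convex_ball (0:ℂ) (r:ℝ)).isPreconnected) hDeriv hBound h0mem hzero hzmem
  rw [(hsum z hzr).tsum_eq] at main
  exact main

end Primitive


section Decomp

open Complex

lemma exists_rep {u : ℂ → ℂ} (hu : HarmonicOnD u) :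
    ∃ f g : ℂ → ℂ, DifferentiableOn ℂ f unitDisk ∧ DifferentiableOn ℂ g unitDisk ∧
      ∀ w ∈ unitDisk, u w = f w + starRingEnd ℂ (g w) := by
  obtain ⟨hC2, hlap⟩ := hu
  have hdiff : ∀ w ∈ unitDisk, DifferentiableAt ℝ u w := fun w hw =>
    (hC2.contDiffAt (uD_nhds hw)).differentiableAt two_ne_zero
  have hΦ : ∀ w ∈ unitDisk, DifferentiableAt ℝ (fderiv ℝ u) w := fun w hw =>
    ((hC2.contDiffAt (uD_nhds hw)).fderiv_right (by norm_num)).differentiableAt one_ne_zero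
  set h : ℂ → ℂ :=
    fun w => (2:ℂ)⁻¹ * (fderiv ℝ u w 1 - Complex.I * fderiv ℝ u w Complex.I) with hhdef
  have hhol : DifferentiableOn ℂ h unitDisk := by
    intro z hz
    have hΦz := hΦ z hz
    set Φ' := fderiv ℝ (fderiv ℝ u) z with hΦ'
    have hA1 : HasFDerivAt (fun w => fderiv ℝ u w (1:ℂ)) (Φ'.flip (1:ℂ)) z := by
      simpa using hΦz.hasFDerivAt.clm_apply (hasFDerivAt_const (1:ℂ) z)
    have hAI : HasFDerivAt (fun w => fderiv ℝ u w Complex.I) (Φ'.flip Complex.I) z := by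
      simpa using hΦz.hasFDerivAt.clm_apply (hasFDerivAt_const Complex.I z)
    have hhd : HasFDerivAt h
        ((2:ℂ)⁻¹ • (Φ'.flip 1 - Complex.I • Φ'.flip Complex.I)) z :=
      (hA1.sub (hAI.const_mul Complex.I)).const_mul ((2:ℂ)⁻¹)
    have hev : ∀ᶠ y in nhds z, HasFDerivAt u (fderiv ℝ u y) y := by
      filter_upwards [uD_nhds hz] with w hw using (hdiff w hw).hasFDerivAt
    have hsymm : Φ' Complex.I 1 = Φ' 1 Complex.I :=
      second_derivative_symmetric_of_eventually hev hΦz.hasFDerivAt Complex.I 1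
    have hlap0 : Φ' 1 1 + Φ' Complex.I Complex.I = 0 := by
      have hl := hlap z hz
      unfold lap at hl
      rwa [hA1.fderiv, hAI.fderiv, ContinuousLinearMap.flip_apply,
        ContinuousLinearMap.flip_apply] at hl
    apply DifferentiableAt.differentiableWithinAt
    apply differentiableAt_of_CR hhd.differentiableAt
    rw [hhd.fderiv]
    simp only [ContinuousLinearMap.smul_apply, ContinuousLinearMap.sub_apply,
      ContinuousLinearMap.flip_apply, smul_eq_mul]
    linear_combination (2:ℂ)⁻¹ * hsymm - (Complex.I/2) * hlap0
      + ((Φ' 1) Complex.I / 2) * Complex.I_sq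
  obtain ⟨F, hF⟩ := exists_primitive hhol
  have hFd : ∀ z ∈ unitDisk, DifferentiableAt ℂ F z := fun z hz => (hF z hz).differentiableAt
  refine ⟨F, fun w => starRingEnd ℂ (u w - F w),
    fun z hz => (hFd z hz).differentiableWithinAt, ?_, ?_⟩
  · intro z hz
    have hGr : DifferentiableAt ℝ (fun w => starRingEnd ℂ (u w - F w)) z :=
      diffR_conj ((hdiff z hz).sub ((hFd z hz).restrictScalars ℝ))
    apply DifferentiableAt.differentiableWithinAt
    apply differentiableAt_of_CR hGr
    have hsub : ∀ c : ℂ, fderiv ℝ (fun w => u w - F w) z c = fderiv ℝ u z c - c * h z := by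
      intro c
      rw [fderiv_fun_sub (hdiff z hz) ((hFd z hz).restrictScalars ℝ),
        ContinuousLinearMap.sub_apply, fderivR_holo (hFd z hz) c, (hF z hz).deriv]
    rw [fderivR_conj_apply, fderivR_conj_apply, hsub, hsub]
    have h1 : Complex.I * starRingEnd ℂ (fderiv ℝ u z 1 - 1 * h z)
        = starRingEnd ℂ (-Complex.I * (fderiv ℝ u z 1 - 1 * h z)) := by
      rw [map_mul, map_neg, Complex.conj_I]; ring
    rw [h1]
    apply congrArg (starRingEnd ℂ)
    have hzdef : h z = (2:ℂ)⁻¹ * (fderiv ℝ u z 1 - Complex.I * fderiv ℝ u z Complex.I) := rfl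
    rw [hzdef]
    linear_combination (fderiv ℝ u z Complex.I) * Complex.I_sq
  · intro w hw
    rw [Complex.conj_conj]
    ring

end Decomp


section Identity

open Complex

lemma eqOn_of_locally {φ ψ : ℂ → ℂ} (hφ : DifferentiableOn ℂ φ unitDisk)
    (hψ : DifferentiableOn ℂ ψ unitDisk) {z₀ : ℂ} (hz₀ : z₀ ∈ unitDisk)
    (hloc : φ =ᶠ[nhds z₀] ψ) : Set.EqOn φ ψ unitDisk :=
  (hφ.analyticOnNhd uD_open).eqOn_of_preconnected_of_eventuallyEq
    (hψ.analyticOnNhd uD_open) uD_conn hz₀ hloc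

lemma factor_zero {φ ψ : ℂ → ℂ} (hφ : DifferentiableOn ℂ φ unitDisk)
    (hψ : DifferentiableOn ℂ ψ unitDisk) (hmul : ∀ z ∈ unitDisk, φ z * ψ z = 0)
    {z₁ : ℂ} (hz₁ : z₁ ∈ unitDisk) (hφz : φ z₁ ≠ 0) : ∀ z ∈ unitDisk, ψ z = 0 := by
  have hcont : ContinuousAt φ z₁ := (hφ.differentiableAt (uD_nhds hz₁)).continuousAt
  have hne : ∀ᶠ w in nhds z₁, φ w ≠ 0 := hcont.eventually_ne hφz
  have hloc : ψ =ᶠ[nhds z₁] (fun _ => 0) := by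
    filter_upwards [hne, uD_nhds hz₁] with w h1 h2
    exact (mul_eq_zero.mp (hmul w h2)).resolve_left h1
  exact fun z hz => eqOn_of_locally hψ (differentiableOn_const 0) hz₁ hloc hz

lemma deriv_diffOn {f : ℂ → ℂ} (hf : DifferentiableOn ℂ f unitDisk) :
    DifferentiableOn ℂ (deriv f) unitDisk :=
  fun z hz => (((hf.analyticOnNhd uD_open).deriv) z hz).differentiableAt.differentiableWithinAt

lemma trichotomy {f g p q : ℂ → ℂ}
    (hf : DifferentiableOn ℂ f unitDisk) (hg : DifferentiableOn ℂ g unitDisk)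
    (hp : DifferentiableOn ℂ p unitDisk) (hq : DifferentiableOn ℂ q unitDisk)
    (hrel : ∀ z ∈ unitDisk, deriv f z * starRingEnd ℂ (deriv q z)
        + deriv p z * starRingEnd ℂ (deriv g z) = 0) :
    ((∀ z ∈ unitDisk, deriv g z = 0) ∧ (∀ z ∈ unitDisk, deriv q z = 0)) ∨
    ((∀ z ∈ unitDisk, deriv f z = 0) ∧ (∀ z ∈ unitDisk, deriv p z = 0)) ∨
    (∃ α β : ℂ, ¬(α = 0 ∧ β = 0) ∧
      (∀ z ∈ unitDisk, starRingEnd ℂ α * deriv g z + starRingEnd ℂ β * deriv q z = 0) ∧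
      (∀ z ∈ unitDisk, α * deriv f z - β * deriv p z = 0)) := by
  have hf' := deriv_diffOn hf
  have hg' := deriv_diffOn hg
  have hp' := deriv_diffOn hp
  have hq' := deriv_diffOn hq
  by_cases hQ : ∀ z ∈ unitDisk, deriv q z = 0
  · by_cases hG : ∀ z ∈ unitDisk, deriv g z = 0
    · exact Or.inl ⟨hG, hQ⟩
    · push_neg at hG
      obtain ⟨z₁, hz₁, hgz⟩ := hG
      have hmul : ∀ z ∈ unitDisk, deriv g z * deriv p z = 0 := by
        intro z hz
        have hr := hrel z hz
        rw [hQ z hz] at hr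
        simp only [map_zero, mul_zero, zero_add] at hr
        rcases mul_eq_zero.mp hr with h | h
        · rw [h, mul_zero]
        · have hgz0 : deriv g z = 0 := by
            have h2 := congrArg (starRingEnd ℂ) h
            simpa using h2
          rw [hgz0, zero_mul]
      have hP := factor_zero hg' hp' hmul hz₁ hgz
      refine Or.inr (Or.inr ⟨0, 1, by simp, ?_, ?_⟩)
      · intro z hz; simp [hQ z hz]
      · intro z hz; simp [hP z hz]
  · by_cases hG : ∀ z ∈ unitDisk, deriv g z = 0
    · push_neg at hQ
      obtain ⟨z₁, hz₁, hqz⟩ := hQ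
      have hmul : ∀ z ∈ unitDisk, deriv q z * deriv f z = 0 := by
        intro z hz
        have hr := hrel z hz
        rw [hG z hz] at hr
        simp only [map_zero, mul_zero, add_zero] at hr
        rcases mul_eq_zero.mp hr with h | h
        · rw [h, mul_zero]
        · have hqz0 : deriv q z = 0 := by
            have h2 := congrArg (starRingEnd ℂ) h
            simpa using h2
          rw [hqz0, zero_mul]
      have hF := factor_zero hq' hf' hmul hz₁ hqz
      refine Or.inr (Or.inr ⟨1, 0, by simp, ?_, ?_⟩)
      · intro z hz; simp [hG z hz]
      · intro z hz; simp [hF z hz]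
    · push_neg at hQ hG
      obtain ⟨z₁, hz₁, hqz⟩ := hQ
      by_cases hP : ∀ z ∈ unitDisk, deriv p z = 0
      · have hmul : ∀ z ∈ unitDisk, deriv q z * deriv f z = 0 := by
          intro z hz
          have hr := hrel z hz
          rw [hP z hz] at hr
          simp only [zero_mul, add_zero] at hr
          rcases mul_eq_zero.mp hr with h | h
          · rw [h, mul_zero]
          · have hqz0 : deriv q z = 0 := by
              have h2 := congrArg (starRingEnd ℂ) h
              simpa using h2
            rw [hqz0, zero_mul]
        exact Or.inr (Or.inl ⟨factor_zero hq' hf' hmul hz₁ hqz, hP⟩)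
      · push_neg at hP
        obtain ⟨z₂, hz₂, hpz⟩ := hP
        have hexists : ∃ z₀ ∈ unitDisk, deriv p z₀ ≠ 0 ∧ deriv q z₀ ≠ 0 := by
          by_contra hcon
          push_neg at hcon
          have hmul : ∀ z ∈ unitDisk, deriv q z * deriv p z = 0 := by
            intro z hz
            by_cases h : deriv p z = 0
            · rw [h, mul_zero]
            · rw [hcon z hz h, zero_mul]
          exact hpz (factor_zero hq' hp' hmul hz₁ hqz z₂ hz₂)
        obtain ⟨z₀, hz₀, hp0, hq0⟩ := hexists
        have hev : ∀ᶠ w in nhds z₀,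
            w ∈ unitDisk ∧ deriv p w ≠ 0 ∧ deriv q w ≠ 0 := by
          have c1 : ContinuousAt (deriv p) z₀ := (hp'.differentiableAt (uD_nhds hz₀)).continuousAt
          have c2 : ContinuousAt (deriv q) z₀ := (hq'.differentiableAt (uD_nhds hz₀)).continuousAt
          filter_upwards [uD_nhds hz₀, c1.eventually_ne hp0, c2.eventually_ne hq0] with w a b c
          exact ⟨a, b, c⟩
        obtain ⟨ε, hε, hball⟩ := Metric.eventually_nhds_iff_ball.mp hev
        have hsub : ∀ w ∈ Metric.ball z₀ ε, w ∈ unitDisk ∧ deriv p w ≠ 0 ∧ deriv q w ≠ 0 :=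
          hball
        have hz₀s : z₀ ∈ Metric.ball z₀ ε := Metric.mem_ball_self hε
        set ψ : ℂ → ℂ := fun w => deriv g w / deriv q w with hψ
        have hψd : ∀ w ∈ Metric.ball z₀ ε, DifferentiableAt ℂ ψ w := by
          intro w hw
          exact ((hg'.differentiableAt (uD_nhds (hsub w hw).1)).div
            (hq'.differentiableAt (uD_nhds (hsub w hw).1)) (hsub w hw).2.2)
        have hconj : ∀ w ∈ Metric.ball z₀ ε,
            starRingEnd ℂ (ψ w) = -deriv f w / deriv p w := by
          intro w hw
          obtain ⟨hwD, hpw, hqw⟩ := hsub w hw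
          have hr := hrel w hwD
          have hqc : starRingEnd ℂ (deriv q w) ≠ 0 := by simpa using hqw
          simp only [hψ, map_div₀]
          field_simp
          linear_combination hr
        have hχd : ∀ w ∈ Metric.ball z₀ ε,
            DifferentiableAt ℂ (fun y => -deriv f y / deriv p y) w := by
          intro w hw
          exact (((hf'.differentiableAt (uD_nhds (hsub w hw).1)).neg).div
            (hp'.differentiableAt (uD_nhds (hsub w hw).1)) (hsub w hw).2.1)
        have hψ0 : ∀ w ∈ Metric.ball z₀ ε, deriv ψ w = 0 := by
          intro w hw
          apply deriv_eq_zero_of_conj_diff (hψd w hw)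
          have hloc : (fun y => -deriv f y / deriv p y) =ᶠ[nhds w]
              (fun y => starRingEnd ℂ (ψ y)) := by
            filter_upwards [Metric.isOpen_ball.mem_nhds hw] with y hy
            exact (hconj y hy).symm
          exact hloc.differentiableAt_iff.mp (hχd w hw)
        have hconst : ∀ w ∈ Metric.ball z₀ ε, ψ w = ψ z₀ := by
          intro w hw
          apply Convex.is_const_of_fderivWithin_eq_zero (convex_ball z₀ ε)
            (fun y hy => (hψd y hy).differentiableWithinAt) ?_ hw hz₀s
          intro y hy
          rw [fderivWithin_of_isOpen Metric.isOpen_ball hy, ← toSpanSingleton_deriv, hψ0 y hy]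
          ext
          simp
        set c : ℂ := ψ z₀ with hc
        have hgq : Set.EqOn (deriv g) (fun w => c * deriv q w) unitDisk := by
          apply eqOn_of_locally hg'
            (fun w hw => ((hq'.differentiableAt (uD_nhds hw)).const_mul c).differentiableWithinAt)
            hz₀
          filter_upwards [Metric.isOpen_ball.mem_nhds hz₀s] with w hw
          have h1 : deriv g w / deriv q w = c := hconst w hw
          rw [div_eq_iff (hsub w hw).2.2] at h1
          simpa [mul_comm] using h1
        have hfp : Set.EqOn (deriv f) (fun w => -starRingEnd ℂ c * deriv p w) unitDisk := by
          apply eqOn_of_locally hf'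
            (fun w hw => ((hp'.differentiableAt (uD_nhds hw)).const_mul _).differentiableWithinAt)
            hz₀
          filter_upwards [Metric.isOpen_ball.mem_nhds hz₀s] with w hw
          have h1 := hconj w hw
          rw [hconst w hw] at h1
          rw [eq_div_iff (hsub w hw).2.1] at h1
          linear_combination h1
        refine Or.inr (Or.inr ⟨1, -starRingEnd ℂ c, by simp, ?_, ?_⟩)
        · intro z hz
          rw [hgq hz]
          simp only [map_one, map_neg, Complex.conj_conj, one_mul]
          ring
        · intro z hz
          rw [hfp hz]
          ring

end Identity


section Translate

open Complex

lemma rep_diff_iff {U f g : ℂ → ℂ}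
    (hf : DifferentiableOn ℂ f unitDisk) (hg : DifferentiableOn ℂ g unitDisk)
    (hrep : ∀ w ∈ unitDisk, U w = f w + starRingEnd ℂ (g w)) :
    DifferentiableOn ℂ U unitDisk ↔ ∀ z ∈ unitDisk, deriv g z = 0 := by
  constructor
  · intro hU z hz
    have hcg : DifferentiableAt ℂ (fun w => starRingEnd ℂ (g w)) z := by
      have hloc : (fun w => U w - f w) =ᶠ[nhds z] (fun w => starRingEnd ℂ (g w)) := by
        filter_upwards [uD_nhds hz] with w hw
        rw [hrep w hw]; ring
      exact hloc.differentiableAt_iff.mp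
        ((hU.differentiableAt (uD_nhds hz)).sub (hf.differentiableAt (uD_nhds hz)))
    exact deriv_eq_zero_of_conj_diff (hg.differentiableAt (uD_nhds hz)) hcg
  · intro h0
    have hconst : ∀ z ∈ unitDisk, g z = g 0 := by
      intro z hz
      apply Convex.is_const_of_fderivWithin_eq_zero uD_conv hg ?_ hz zero_mem_uD
      intro y hy
      rw [fderivWithin_of_isOpen uD_open hy, ← toSpanSingleton_deriv, h0 y hy]
      ext
      simp
    intro z hz
    have hloc : (fun w => f w + starRingEnd ℂ (g 0)) =ᶠ[nhds z] U := by
      filter_upwards [uD_nhds hz] with w hw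
      rw [hrep w hw, hconst w hw]
    exact (hloc.differentiableAt_iff.mp
      ((hf.differentiableAt (uD_nhds hz)).add_const _)).differentiableWithinAt

end Translate


/-- Lemma 41. If `u, v` are harmonic on `D`, then `uv` is harmonic on `D`
if and only if (a) `u` and `v` are both holomorphic, or (b) `ū` and `v̄` are both
holomorphic, or (c) there are `α, β ∈ ℂ`, not both `0`, with `αu + βv` and `ᾱū − β̄v̄`
both holomorphic. -/
theorem harmonic_mul_iff
    (u v : ℂ → ℂ) (hu : HarmonicOnD u) (hv : HarmonicOnD v) :
    HarmonicOnD (fun w => u w * v w) ↔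
      (DifferentiableOn ℂ u unitDisk ∧ DifferentiableOn ℂ v unitDisk) ∨
        (DifferentiableOn ℂ (fun w => (starRingEnd ℂ) (u w)) unitDisk ∧
          DifferentiableOn ℂ (fun w => (starRingEnd ℂ) (v w)) unitDisk) ∨
        (∃ α β : ℂ, ¬(α = 0 ∧ β = 0) ∧
          DifferentiableOn ℂ (fun w => α * u w + β * v w) unitDisk ∧
          DifferentiableOn ℂ
            (fun w => (starRingEnd ℂ) α * (starRingEnd ℂ) (u w) -
              (starRingEnd ℂ) β * (starRingEnd ℂ) (v w)) unitDisk) := by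
  obtain ⟨f, g, hfd, hgd, hfg⟩ := exists_rep hu
  obtain ⟨p, q, hpd, hqd, hpq⟩ := exists_rep hv
  have hlapuv : ∀ z ∈ unitDisk, lap (fun w => u w * v w) z
      = 4 * (deriv f z * starRingEnd ℂ (deriv q z)
          + deriv p z * starRingEnd ℂ (deriv g z)) := by
    intro z hz
    have hloc : (fun w => u w * v w) =ᶠ[nhds z]
        (fun w => (f w + starRingEnd ℂ (g w)) * (p w + starRingEnd ℂ (q w))) := by
      filter_upwards [uD_nhds hz] with w hw
      rw [hfg w hw, hpq w hw]
    rw [lap_congr hloc, lap_prod hfd hgd hpd hqd hz]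
  have hHiff : HarmonicOnD (fun w => u w * v w) ↔
      (∀ z ∈ unitDisk, deriv f z * starRingEnd ℂ (deriv q z)
        + deriv p z * starRingEnd ℂ (deriv g z) = 0) := by
    constructor
    · intro hH z hz
      have h1 := hH.2 z hz
      rw [hlapuv z hz] at h1
      have h4 : (4:ℂ) ≠ 0 := by norm_num
      exact (mul_eq_zero.mp h1).resolve_left h4
    · intro hrel
      refine ⟨hu.1.mul hv.1, fun z hz => ?_⟩
      rw [hlapuv z hz, hrel z hz, mul_zero]
  have hA : DifferentiableOn ℂ u unitDisk ↔ ∀ z ∈ unitDisk, deriv g z = 0 :=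
    rep_diff_iff hfd hgd hfg
  have hA' : DifferentiableOn ℂ v unitDisk ↔ ∀ z ∈ unitDisk, deriv q z = 0 :=
    rep_diff_iff hpd hqd hpq
  have hB : DifferentiableOn ℂ (fun w => starRingEnd ℂ (u w)) unitDisk ↔
      ∀ z ∈ unitDisk, deriv f z = 0 := by
    apply rep_diff_iff hgd hfd
    intro w hw
    rw [hfg w hw, map_add, Complex.conj_conj]
    ring
  have hB' : DifferentiableOn ℂ (fun w => starRingEnd ℂ (v w)) unitDisk ↔
      ∀ z ∈ unitDisk, deriv p z = 0 := by
    apply rep_diff_iff hqd hpd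
    intro w hw
    rw [hpq w hw, map_add, Complex.conj_conj]
    ring
  have hC : ∀ α β : ℂ,
      (DifferentiableOn ℂ (fun w => α * u w + β * v w) unitDisk ↔
        ∀ z ∈ unitDisk,
          starRingEnd ℂ α * deriv g z + starRingEnd ℂ β * deriv q z = 0) := by
    intro α β
    have h1 : DifferentiableOn ℂ (fun w => α * f w + β * p w) unitDisk :=
      fun z hz => ((hfd z hz).const_mul α).add ((hpd z hz).const_mul β)
    have h2 : DifferentiableOn ℂ
        (fun w => starRingEnd ℂ α * g w + starRingEnd ℂ β * q w) unitDisk :=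
      fun z hz => ((hgd z hz).const_mul _).add ((hqd z hz).const_mul _)
    have hrep : ∀ w ∈ unitDisk, α * u w + β * v w
        = (α * f w + β * p w)
          + starRingEnd ℂ (starRingEnd ℂ α * g w + starRingEnd ℂ β * q w) := by
      intro w hw
      rw [hfg w hw, hpq w hw]
      simp only [map_add, map_mul, Complex.conj_conj]
      ring
    rw [rep_diff_iff h1 h2 hrep]
    have hder : ∀ z ∈ unitDisk,
        deriv (fun w => starRingEnd ℂ α * g w + starRingEnd ℂ β * q w) z
          = starRingEnd ℂ α * deriv g z + starRingEnd ℂ β * deriv q z := by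
      intro z hz
      rw [deriv_fun_add ((hgd.differentiableAt (uD_nhds hz)).const_mul _)
        ((hqd.differentiableAt (uD_nhds hz)).const_mul _),
        deriv_const_mul _ (hgd.differentiableAt (uD_nhds hz)),
        deriv_const_mul _ (hqd.differentiableAt (uD_nhds hz))]
    constructor
    · intro h z hz; rw [← hder z hz]; exact h z hz
    · intro h z hz; rw [hder z hz]; exact h z hz
  have hC' : ∀ α β : ℂ,
      (DifferentiableOn ℂ (fun w => starRingEnd ℂ α * starRingEnd ℂ (u w)
          - starRingEnd ℂ β * starRingEnd ℂ (v w)) unitDisk ↔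
        ∀ z ∈ unitDisk, α * deriv f z - β * deriv p z = 0) := by
    intro α β
    have h1 : DifferentiableOn ℂ
        (fun w => starRingEnd ℂ α * g w - starRingEnd ℂ β * q w) unitDisk :=
      fun z hz => ((hgd z hz).const_mul _).sub ((hqd z hz).const_mul _)
    have h2 : DifferentiableOn ℂ (fun w => α * f w - β * p w) unitDisk :=
      fun z hz => ((hfd z hz).const_mul α).sub ((hpd z hz).const_mul β)
    have hrep : ∀ w ∈ unitDisk,
        starRingEnd ℂ α * starRingEnd ℂ (u w) - starRingEnd ℂ β * starRingEnd ℂ (v w)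
          = (starRingEnd ℂ α * g w - starRingEnd ℂ β * q w)
            + starRingEnd ℂ (α * f w - β * p w) := by
      intro w hw
      rw [hfg w hw, hpq w hw]
      simp only [map_add, map_mul, map_sub, Complex.conj_conj]
      ring
    rw [rep_diff_iff h1 h2 hrep]
    have hder : ∀ z ∈ unitDisk, deriv (fun w => α * f w - β * p w) z
        = α * deriv f z - β * deriv p z := by
      intro z hz
      rw [deriv_fun_sub ((hfd.differentiableAt (uD_nhds hz)).const_mul _)
        ((hpd.differentiableAt (uD_nhds hz)).const_mul _),
        deriv_const_mul _ (hfd.differentiableAt (uD_nhds hz)),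
        deriv_const_mul _ (hpd.differentiableAt (uD_nhds hz))]
    constructor
    · intro h z hz; rw [← hder z hz]; exact h z hz
    · intro h z hz; rw [hder z hz]; exact h z hz
  rw [hHiff]
  constructor
  · intro hrel
    rcases trichotomy hfd hgd hpd hqd hrel with ⟨h1, h2⟩ | ⟨h1, h2⟩ | ⟨α, β, hne, h1, h2⟩
    · exact Or.inl ⟨hA.mpr h1, hA'.mpr h2⟩
    · exact Or.inr (Or.inl ⟨hB.mpr h1, hB'.mpr h2⟩)
    · exact Or.inr (Or.inr ⟨α, β, hne, (hC α β).mpr h1, (hC' α β).mpr h2⟩)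
  · rintro (⟨h1, h2⟩ | ⟨h1, h2⟩ | ⟨α, β, hne, h1, h2⟩)
    · intro z hz
      rw [hA.mp h1 z hz, hA'.mp h2 z hz]
      simp
    · intro z hz
      rw [hB.mp h1 z hz, hB'.mp h2 z hz]
      simp
    · have e1 := (hC α β).mp h1
      have e2 := (hC' α β).mp h2
      intro z hz
      by_cases hα : α = 0
      · have hβ : β ≠ 0 := fun hb => hne ⟨hα, hb⟩
        have hq0 : deriv q z = 0 := by
          have := e1 z hz
          rw [hα] at this
          simp only [map_zero, zero_mul, zero_add] at this
          rcases mul_eq_zero.mp this with h | h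
          · exact absurd h (by simpa using hβ)
          · exact h
        have hp0 : deriv p z = 0 := by
          have := e2 z hz
          rw [hα] at this
          simp only [zero_mul, zero_sub, neg_eq_zero] at this
          rcases mul_eq_zero.mp this with h | h
          · exact absurd h hβ
          · exact h
        rw [hq0, hp0]
        simp
      · have e1c : α * starRingEnd ℂ (deriv g z) + β * starRingEnd ℂ (deriv q z) = 0 := by
          have := congrArg (starRingEnd ℂ) (e1 z hz)
          simpa using this
        have hX : α * (deriv f z * starRingEnd ℂ (deriv q z)
            + deriv p z * starRingEnd ℂ (deriv g z)) = 0 := by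
          linear_combination (starRingEnd ℂ (deriv q z)) * (e2 z hz)
            + (deriv p z) * e1c
        exact (mul_eq_zero.mp hX).resolve_left hα
end
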